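/- arXiv:chao-dyn/9603017 — 11 statements merged into one kernel-verified Lean document; each statement's English description precedes it below -/
import Mathlib

section
/- Let (a_n)_{n≥1} be a sequence of complex numbers such that the power series Σ_{n≥1} (a_n/n) z^n has positive radius of convergence, and define R(z) = exp(Σ_{n≥1} (a_n/n) z^n) on a neighborhood of 0. Then R(z) coincides on some neighborhood of 0 with a rational function (a quotient of two complex polynomials) if and only if there exist finitely many complex numbers α_1,…,α_s and β_1,…,β_t such that a_n = Σ_{j=1}^t β_j^n − Σ_{i=1}^s α_i^n for every n ≥ 1. -/
open Complex Polynomial Filter Topology Finset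

namespace RZaux


lemma hasSum_neg_log (w : ℂ) (hw : ‖w‖ < 1) :
    HasSum (fun n : ℕ => w ^ (n + 1) / ((n : ℂ) + 1)) (-Complex.log (1 - w)) := by
  have h := Complex.hasSum_taylorSeries_neg_log hw
  have h2 := (hasSum_nat_add_iff' (f := fun n : ℕ => w ^ n / (n : ℂ)) 1).2 h
  simp only [Finset.range_one, Finset.sum_singleton, Nat.cast_zero, pow_zero, div_zero,
    sub_zero] at h2
  convert h2 using 1
  · rfl
  funext n
  push_cast
  ring

lemma one_sub_ne (w : ℂ) (hw : ‖w‖ < 1) : (1 : ℂ) - w ≠ 0 := by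
  intro h
  rw [sub_eq_zero] at h
  rw [← h] at hw
  simp at hw

lemma hasSum_family {s t : ℕ} (α : Fin s → ℂ) (β : Fin t → ℂ) (z : ℂ)
    (hα : ∀ i, ‖α i * z‖ < 1) (hβ : ∀ j, ‖β j * z‖ < 1) :
    HasSum (fun n : ℕ =>
        ((∑ j, β j ^ (n + 1)) - ∑ i, α i ^ (n + 1)) / ((n : ℂ) + 1) * z ^ (n + 1))
      ((∑ j, -Complex.log (1 - β j * z)) - ∑ i, -Complex.log (1 - α i * z)) := by
  have hb : HasSum (fun n : ℕ => ∑ j, (β j * z) ^ (n + 1) / ((n : ℂ) + 1))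
      (∑ j, -Complex.log (1 - β j * z)) :=
    hasSum_sum fun j _ => hasSum_neg_log _ (hβ j)
  have ha : HasSum (fun n : ℕ => ∑ i, (α i * z) ^ (n + 1) / ((n : ℂ) + 1))
      (∑ i, -Complex.log (1 - α i * z)) :=
    hasSum_sum fun i _ => hasSum_neg_log _ (hα i)
  convert hb.sub ha using 1
  · rfl
  funext n
  simp only [mul_pow, sub_div, sub_mul, Finset.sum_div, Finset.sum_mul]
  congr 1 <;> exact Finset.sum_congr rfl fun _ _ => by ring

lemma exp_tsum_eq {s t : ℕ} (α : Fin s → ℂ) (β : Fin t → ℂ) (z : ℂ)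
    (hα : ∀ i, ‖α i * z‖ < 1) (hβ : ∀ j, ‖β j * z‖ < 1) :
    Complex.exp (∑' n : ℕ,
        ((∑ j, β j ^ (n + 1)) - ∑ i, α i ^ (n + 1)) / ((n : ℂ) + 1) * z ^ (n + 1))
      * ∏ j, (1 - β j * z) = ∏ i, (1 - α i * z) := by
  have hbne : ∀ j, (1 : ℂ) - β j * z ≠ 0 := fun j => one_sub_ne _ (hβ j)
  have hane : ∀ i, (1 : ℂ) - α i * z ≠ 0 := fun i => one_sub_ne _ (hα i)
  rw [(hasSum_family α β z hα hβ).tsum_eq, Complex.exp_sub, Complex.exp_sum, Complex.exp_sum]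
  rw [Finset.prod_congr rfl (fun j _ => by
        rw [Complex.exp_neg, Complex.exp_log (hbne j)] :
      ∀ j ∈ Finset.univ, Complex.exp (-Complex.log (1 - β j * z)) = (1 - β j * z)⁻¹),
    Finset.prod_congr rfl (fun i _ => by
        rw [Complex.exp_neg, Complex.exp_log (hane i)] :
      ∀ i ∈ Finset.univ, Complex.exp (-Complex.log (1 - α i * z)) = (1 - α i * z)⁻¹)]
  have h1 : ∏ j, (1 - β j * z) ≠ 0 := Finset.prod_ne_zero_iff.2 fun j _ => hbne j
  have h2 : ∏ i, (1 - α i * z) ≠ 0 := Finset.prod_ne_zero_iff.2 fun i _ => hane i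
  rw [Finset.prod_inv_distrib, Finset.prod_inv_distrib]
  field_simp
  simp only [mul_comm z]
  ring



lemma hasFPowerSeriesAt_tsum (u : ℕ → ℂ)
    (hs : ∀ᶠ z in 𝓝 (0 : ℂ), Summable fun n : ℕ => u (n + 1) / ((n : ℂ) + 1) * z ^ (n + 1)) :
    HasFPowerSeriesAt (fun z => ∑' n : ℕ, u (n + 1) / ((n : ℂ) + 1) * z ^ (n + 1))
      (FormalMultilinearSeries.ofScalars ℂ (fun n => u n / (n : ℂ))) 0 := by
  rw [hasFPowerSeriesAt_iff]
  filter_upwards [hs] with z hz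
  have hcoeff : ∀ n : ℕ,
      (FormalMultilinearSeries.ofScalars ℂ (fun n => u n / (n : ℂ))).coeff n = u n / (n : ℂ) := by
    intro n
    simp [FormalMultilinearSeries.coeff, FormalMultilinearSeries.ofScalars,
      List.ofFn_const, List.prod_replicate, List.prod_ofFn]
  simp only [hcoeff, zero_add, smul_eq_mul]
  refine (hasSum_nat_add_iff' (f := fun n : ℕ => z ^ n * (u n / (n : ℂ))) 1).1 ?_
  simp only [Finset.range_one, Finset.sum_singleton, Nat.cast_zero, div_zero, mul_zero, sub_zero,
    pow_zero]
  convert hz.hasSum using 1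
  · rfl
  funext n
  push_cast
  ring

lemma eventually_norm_lt {s : ℕ} (c : Fin s → ℂ) :
    ∀ᶠ z : ℂ in 𝓝 0, ∀ i, ‖c i * z‖ < 1 := by
  rw [Filter.eventually_all]
  intro i
  have h : Tendsto (fun z : ℂ => ‖c i * z‖) (𝓝 0) (𝓝 ‖c i * 0‖) :=
    ((continuous_const.mul continuous_id).norm).tendsto 0
  simp only [mul_zero, norm_zero] at h
  exact h.eventually_lt_const one_pos

lemma poly_factor (P : ℂ[X]) (hP0 : P.eval 0 ≠ 0) :
    ∃ (s : ℕ) (α : Fin s → ℂ), ∀ z : ℂ, P.eval z = P.eval 0 * ∏ i, (1 - α i * z) := by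
  have hP : P ≠ 0 := fun h => hP0 (by simp [h])
  have hsp := (IsAlgClosed.splits P).eq_prod_roots
  have hroots : ∀ ρ ∈ P.roots, ρ ≠ (0 : ℂ) := by
    rintro ρ hρ rfl
    exact hP0 (isRoot_of_mem_roots hρ)
  have heval : ∀ z : ℂ, P.eval z = P.leadingCoeff * ((P.roots.map fun ρ => z - ρ)).prod := by
    intro z
    conv_lhs => rw [hsp]
    rw [eval_mul, eval_C, eval_multiset_prod, Multiset.map_map]
    simp [Function.comp]
  set L := P.roots.toList with hL
  refine ⟨L.length, fun i => (L.get i)⁻¹, fun z => ?_⟩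
  have hlist : ∀ f : ℂ → ℂ, (∏ i : Fin L.length, f (L.get i)) = (P.roots.map f).prod := by
    intro f
    rw [show (P.roots : Multiset ℂ) = (L : Multiset ℂ) by rw [hL, Multiset.coe_toList]]
    rw [Multiset.map_coe, Multiset.prod_coe]
    exact Fin.prod_univ_fun_getElem L f
  have key : (∏ i : Fin L.length, (1 - (L.get i)⁻¹ * z)) = (P.roots.map fun ρ => 1 - ρ⁻¹ * z).prod :=
    hlist (fun ρ => 1 - ρ⁻¹ * z)
  rw [key, heval z, heval 0, mul_assoc, ← Multiset.prod_map_mul]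
  congr 1
  refine congrArg Multiset.prod (Multiset.map_congr rfl fun ρ hρ => ?_)
  have hρ0 := hroots ρ hρ
  field_simp
  ring



lemma const_of_int_values {B : Set ℂ} (hB : Convex ℝ B) {u : ℂ → ℂ} (hu : ContinuousOn u B)
    (hq : ∀ z ∈ B, ∃ n : ℤ, u z = n * (2 * Real.pi * Complex.I)) {z w : ℂ}
    (hz : z ∈ B) (hw : w ∈ B) : u z = u w := by
  set v : ℂ → ℝ := fun z => (u z).im / (2 * Real.pi) with hv
  have him : ∀ (n : ℤ), ((n : ℂ) * (2 * Real.pi * Complex.I)).im = n * (2 * Real.pi) := by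
    intro n
    simp [Complex.mul_im]
  have hvz : ∀ x ∈ B, ∀ n : ℤ, u x = n * (2 * Real.pi * Complex.I) → v x = n := by
    intro x _ n hn
    rw [hv]
    simp only [hn, him]
    field_simp
  have hvcont : ContinuousOn v B := (Complex.continuous_im.comp_continuousOn hu).div_const _
  have hconn : IsPreconnected (v '' B) := hB.isPreconnected.image v hvcont
  have hord := hconn.ordConnected
  obtain ⟨nz, hnz⟩ := hq z hz
  obtain ⟨nw, hnw⟩ := hq w hw
  suffices h : nz = nw by rw [hnz, hnw, h]
  by_contra hne
  have h1 : ((nz : ℝ)) ∈ v '' B := ⟨z, hz, hvz z hz nz hnz⟩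
  have h2 : ((nw : ℝ)) ∈ v '' B := ⟨w, hw, hvz w hw nw hnw⟩
  have key : ∀ (aa bb : ℤ), aa < bb → ((aa : ℝ)) ∈ v '' B → ((bb : ℝ)) ∈ v '' B → False := by
    intro aa bb hab ha hb
    have hmid : ((aa : ℝ) + 1/2) ∈ Set.Icc ((aa : ℝ)) ((bb : ℝ)) := by
      constructor
      · linarith
      · have : (aa : ℝ) + 1 ≤ bb := by exact_mod_cast hab
        linarith
    have hmem := hord.out ha hb hmid
    obtain ⟨y, hyB, hy⟩ := hmem
    obtain ⟨k, hk⟩ := hq y hyB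
    have : v y = k := hvz y hyB k hk
    rw [this] at hy
    have h2k : (2 * k : ℝ) = 2 * aa + 1 := by rw [hy]; ring
    have : (2 * k : ℤ) = 2 * aa + 1 := by exact_mod_cast h2k
    omega
  rcases lt_or_gt_of_ne hne with h | h
  · exact key nz nw h h1 h2
  · exact key nw nz h h2 h1



theorem main (a : ℕ → ℂ)
    (hconv : ∃ r : ℝ, 0 < r ∧ ∀ z : ℂ, ‖z‖ < r →
      Summable (fun n : ℕ => a (n + 1) / ((n : ℂ) + 1) * z ^ (n + 1))) :
    (∃ (p q : Polynomial ℂ), q ≠ 0 ∧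
      ∀ᶠ z in nhds (0 : ℂ),
        Complex.exp (∑' n : ℕ, a (n + 1) / ((n : ℂ) + 1) * z ^ (n + 1)) * q.eval z
          = p.eval z) ↔
    (∃ (s t : ℕ) (α : Fin s → ℂ) (β : Fin t → ℂ),
      ∀ n : ℕ, 1 ≤ n → a n = (∑ j, β j ^ n) - ∑ i, α i ^ n) := by
  constructor
  · rintro ⟨p, q, hq, hev⟩
    obtain ⟨r, hr, hsum⟩ := hconv
    set F : ℂ → ℂ := fun z => ∑' n : ℕ, a (n + 1) / ((n : ℂ) + 1) * z ^ (n + 1) with hFdef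
    have hsumF : ∀ᶠ z in 𝓝 (0 : ℂ),
        Summable fun n : ℕ => a (n + 1) / ((n : ℂ) + 1) * z ^ (n + 1) := by
      filter_upwards [Metric.ball_mem_nhds (0 : ℂ) hr] with z hz
      exact hsum z (by simpa [dist_eq_norm] using hz)
    have hFps := hasFPowerSeriesAt_tsum a hsumF
    have hF0 : F 0 = 0 := by rw [hFdef]; simp
    have hFcont : ContinuousAt F 0 := hFps.continuousAt
    have htE : Tendsto (fun z => Complex.exp (F z)) (𝓝 0) (𝓝 1) := by
      have h1 : Tendsto F (𝓝 0) (𝓝 0) := by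
        have h0 := hFcont.tendsto
        rwa [hF0] at h0
      have h2 := (Complex.continuous_exp.tendsto (0 : ℂ)).comp h1
      simpa [Function.comp_def] using h2
    have hp : p ≠ 0 := by
      rintro rfl
      refine hq (Polynomial.eq_zero_of_infinite_isRoot q ?_)
      refine Set.Infinite.mono ?_ (infinite_of_mem_nhds (0 : ℂ) hev)
      intro x hx
      simp only [Set.mem_setOf_eq, eval_zero] at hx ⊢
      exact (mul_eq_zero.mp hx).resolve_left (Complex.exp_ne_zero _)
    set k := p.rootMultiplicity 0 with hk
    set m := q.rootMultiplicity 0 with hm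
    set P := p /ₘ (X - C 0) ^ k with hPdef
    set Q := q /ₘ (X - C 0) ^ m with hQdef
    have hpP : (X - C 0) ^ k * P = p := p.pow_mul_divByMonic_rootMultiplicity_eq 0
    have hqQ : (X - C 0) ^ m * Q = q := q.pow_mul_divByMonic_rootMultiplicity_eq 0
    have hP0 : P.eval 0 ≠ 0 := Polynomial.eval_divByMonic_pow_rootMultiplicity_ne_zero 0 hp
    have hQ0 : Q.eval 0 ≠ 0 := Polynomial.eval_divByMonic_pow_rootMultiplicity_ne_zero 0 hq
    have hev2 : ∀ᶠ z in 𝓝 (0 : ℂ),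
        Complex.exp (F z) * (z ^ m * Q.eval z) = z ^ k * P.eval z := by
      filter_upwards [hev] with z hz
      rw [← hpP, ← hqQ] at hz
      simpa only [eval_mul, eval_pow, eval_sub, eval_X, eval_C, sub_zero] using hz
    have htQ : Tendsto (fun z => Q.eval z) (𝓝 (0 : ℂ)) (𝓝 (Q.eval 0)) := Q.continuous.tendsto 0
    have htP : Tendsto (fun z => P.eval z) (𝓝 (0 : ℂ)) (𝓝 (P.eval 0)) := P.continuous.tendsto 0
    have hl_le : 𝓝[≠] (0 : ℂ) ≤ 𝓝 0 := nhdsWithin_le_nhds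
    have hne : ∀ᶠ z in 𝓝[≠] (0 : ℂ), z ≠ (0 : ℂ) :=
      eventually_mem_nhdsWithin.mono fun z hz => hz
    have hkm : k = m := by
      by_contra hne'
      rcases Nat.lt_or_ge k m with hlt | hge
      · have e1 : ∀ᶠ z in 𝓝[≠] (0 : ℂ),
            P.eval z = Complex.exp (F z) * (z ^ (m - k) * Q.eval z) := by
          filter_upwards [hev2.filter_mono hl_le, hne] with z hz hz0
          have hzk : z ^ k ≠ 0 := pow_ne_zero _ hz0
          apply mul_left_cancel₀ hzk
          rw [← hz, show z ^ m = z ^ k * z ^ (m - k) by rw [← pow_add]; congr 1; omega]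
          ring
        have hpow : Tendsto (fun z : ℂ => z ^ (m - k)) (𝓝 0) (𝓝 0) := by
          have h := (continuous_pow (m - k)).tendsto (0 : ℂ)
          rwa [zero_pow (by omega : m - k ≠ 0)] at h
        have t1 : Tendsto (fun z => P.eval z) (𝓝[≠] (0 : ℂ)) (𝓝 0) := by
          refine Tendsto.congr' (Filter.EventuallyEq.symm e1) ?_
          have h := (htE.mono_left hl_le).mul
            (((hpow.mono_left hl_le)).mul (htQ.mono_left hl_le))
          simpa using h
        exact hP0 (tendsto_nhds_unique (htP.mono_left hl_le) t1)
      · have hlt : m < k := by omega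
        have e1 : ∀ᶠ z in 𝓝[≠] (0 : ℂ),
            Complex.exp (F z) * Q.eval z = z ^ (k - m) * P.eval z := by
          filter_upwards [hev2.filter_mono hl_le, hne] with z hz hz0
          have hzm : z ^ m ≠ 0 := pow_ne_zero _ hz0
          apply mul_left_cancel₀ hzm
          rw [show z ^ m * (z ^ (k - m) * P.eval z) = z ^ (m + (k - m)) * P.eval z by
            rw [pow_add]; ring, show m + (k - m) = k by omega, ← hz]
          ring
        have hpow : Tendsto (fun z : ℂ => z ^ (k - m)) (𝓝 0) (𝓝 0) := by
          have h := (continuous_pow (k - m)).tendsto (0 : ℂ)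
          rwa [zero_pow (by omega : k - m ≠ 0)] at h
        have t1 : Tendsto (fun z => Complex.exp (F z) * Q.eval z) (𝓝[≠] (0 : ℂ)) (𝓝 0) := by
          refine Tendsto.congr' (Filter.EventuallyEq.symm e1) ?_
          have h := (hpow.mono_left hl_le).mul (htP.mono_left hl_le)
          simpa using h
        have t2 : Tendsto (fun z => Complex.exp (F z) * Q.eval z) (𝓝[≠] (0 : ℂ))
            (𝓝 (Q.eval 0)) := by
          have h := (htE.mono_left hl_le).mul (htQ.mono_left hl_le)
          simpa using h
        exact hQ0 (tendsto_nhds_unique t2 t1)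
    have hPQ : ∀ᶠ z in 𝓝[≠] (0 : ℂ), Complex.exp (F z) * Q.eval z = P.eval z := by
      filter_upwards [hev2.filter_mono hl_le, hne] with z hz hz0
      rw [← hkm] at hz
      have hzk : z ^ k ≠ 0 := pow_ne_zero _ hz0
      apply mul_left_cancel₀ hzk
      rw [← hz]
      ring
    have hPQ0 : P.eval 0 = Q.eval 0 := by
      have t1 : Tendsto (fun z => Complex.exp (F z) * Q.eval z) (𝓝[≠] (0 : ℂ))
          (𝓝 (Q.eval 0)) := by
        have h := (htE.mono_left hl_le).mul (htQ.mono_left hl_le)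
        simpa using h
      have t2 : Tendsto (fun z => Complex.exp (F z) * Q.eval z) (𝓝[≠] (0 : ℂ))
          (𝓝 (P.eval 0)) := Tendsto.congr' (Filter.EventuallyEq.symm hPQ) (htP.mono_left hl_le)
      exact tendsto_nhds_unique t2 t1
    have hPQall : ∀ᶠ z in 𝓝 (0 : ℂ), Complex.exp (F z) * Q.eval z = P.eval z := by
      rw [← nhdsNE_sup_pure (0 : ℂ), eventually_sup]
      refine ⟨hPQ, ?_⟩
      rw [eventually_pure, hF0, Complex.exp_zero, one_mul]
      exact hPQ0.symm
    obtain ⟨sN, α, hPfac⟩ := poly_factor P hP0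
    obtain ⟨tN, β, hQfac⟩ := poly_factor Q hQ0
    set b : ℕ → ℂ := fun n => (∑ j, β j ^ n) - ∑ i, α i ^ n with hbdef
    have hsumG : ∀ᶠ z in 𝓝 (0 : ℂ),
        Summable fun n : ℕ => b (n + 1) / ((n : ℂ) + 1) * z ^ (n + 1) := by
      filter_upwards [eventually_norm_lt α, eventually_norm_lt β] with z h1 h2
      exact (hasSum_family α β z h1 h2).summable
    set G : ℂ → ℂ := fun z => ∑' n : ℕ, b (n + 1) / ((n : ℂ) + 1) * z ^ (n + 1) with hGdef
    have hGps := hasFPowerSeriesAt_tsum b hsumG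
    have hG0 : G 0 = 0 := by rw [hGdef]; simp
    have hexp : ∀ᶠ z in 𝓝 (0 : ℂ), Complex.exp (F z) = Complex.exp (G z) := by
      filter_upwards [hPQall, eventually_norm_lt α, eventually_norm_lt β] with z h1 h2 h3
      have key := exp_tsum_eq α β z h2 h3
      have hGz : G z = ∑' n : ℕ,
          ((∑ j, β j ^ (n + 1)) - ∑ i, α i ^ (n + 1)) / ((n : ℂ) + 1) * z ^ (n + 1) := rfl
      rw [← hGz] at key
      have hβne : (∏ j, (1 - β j * z)) ≠ 0 :=
        Finset.prod_ne_zero_iff.2 fun j _ => one_sub_ne _ (h3 j)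
      rw [hPfac z, hQfac z, hPQ0] at h1
      have h4 : Complex.exp (F z) * ∏ j, (1 - β j * z) = ∏ i, (1 - α i * z) := by
        apply mul_left_cancel₀ hQ0
        linear_combination h1
      rw [← key] at h4
      exact mul_right_cancel₀ hβne h4
    obtain ⟨r1, hr1⟩ := id hFps
    obtain ⟨r2, hr2⟩ := id hGps
    obtain ⟨ε, hε, hball⟩ := Metric.mem_nhds_iff.1
      (Filter.inter_mem (Filter.inter_mem (EMetric.ball_mem_nhds (0 : ℂ) hr1.r_pos)
        (EMetric.ball_mem_nhds (0 : ℂ) hr2.r_pos)) hexp)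
    have hcontF : ContinuousOn F (Metric.ball (0 : ℂ) ε) :=
      hr1.continuousOn.mono fun z hz => (hball hz).1.1
    have hcontG : ContinuousOn G (Metric.ball (0 : ℂ) ε) :=
      hr2.continuousOn.mono fun z hz => (hball hz).1.2
    have hu : ContinuousOn (fun z => F z - G z) (Metric.ball (0 : ℂ) ε) := hcontF.sub hcontG
    have hqv : ∀ z ∈ Metric.ball (0 : ℂ) ε, ∃ n : ℤ,
        F z - G z = n * (2 * Real.pi * Complex.I) := by
      intro z hz
      have hzz : Complex.exp (F z) = Complex.exp (G z) := (hball hz).2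
      exact Complex.exp_eq_one_iff.1
        (by rw [Complex.exp_sub, hzz, div_self (Complex.exp_ne_zero _)])
    have hFG : ∀ᶠ z in 𝓝 (0 : ℂ), F z = G z := by
      filter_upwards [Metric.ball_mem_nhds (0 : ℂ) hε] with z hz
      have hcv := const_of_int_values (convex_ball 0 ε) hu hqv hz (Metric.mem_ball_self hε)
      have h0 : F 0 - G 0 = 0 := by rw [hF0, hG0, sub_zero]
      rw [h0] at hcv
      exact sub_eq_zero.mp hcv
    have huniq := hFps.eq_formalMultilinearSeries_of_eventually hGps hFG
    have hco := FormalMultilinearSeries.ofScalars_series_injective ℂ ℂ huniq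
    refine ⟨sN, tN, α, β, fun n hn => ?_⟩
    have h := congrFun hco n
    have hn0 : (n : ℂ) ≠ 0 := Nat.cast_ne_zero.2 (by omega)
    field_simp at h
    exact h
  · rintro ⟨s, t, α, β, hab⟩
    refine ⟨∏ i, (1 - C (α i) * X), ∏ j, (1 - C (β j) * X), ?_, ?_⟩
    · intro h
      have h0 := congrArg (eval 0) h
      simp [eval_prod] at h0
    · filter_upwards [eventually_norm_lt α, eventually_norm_lt β] with z h1 h2
      have key := exp_tsum_eq α β z h1 h2
      have ht : (∑' n : ℕ, a (n + 1) / ((n : ℂ) + 1) * z ^ (n + 1)) = ∑' n : ℕ,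
          ((∑ j, β j ^ (n + 1)) - ∑ i, α i ^ (n + 1)) / ((n : ℂ) + 1) * z ^ (n + 1) := by
        refine tsum_congr fun n => ?_
        rw [hab (n + 1) (by omega)]
      rw [ht]
      simpa [eval_prod] using key

end RZaux

/-- If the power series `Σ_{n≥1} (aₙ/n) zⁿ` has positive radius of
convergence and `R(z) = exp(Σ_{n≥1} (aₙ/n) zⁿ)`, then `R` coincides near `0` with a rational
function iff there are finitely many complex numbers `α₁,…,α_s`, `β₁,…,β_t` with
`aₙ = Σⱼ βⱼⁿ − Σᵢ αᵢⁿ` for all `n ≥ 1`. -/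
theorem reidemeister_zeta_rational_iff_coeffs_exponential_sums (a : ℕ → ℂ)
    (hconv : ∃ r : ℝ, 0 < r ∧ ∀ z : ℂ, ‖z‖ < r →
      Summable (fun n : ℕ => a (n + 1) / ((n : ℂ) + 1) * z ^ (n + 1))) :
    (∃ (p q : Polynomial ℂ), q ≠ 0 ∧
      ∀ᶠ z in nhds (0 : ℂ),
        Complex.exp (∑' n : ℕ, a (n + 1) / ((n : ℂ) + 1) * z ^ (n + 1)) * q.eval z
          = p.eval z) ↔
    (∃ (s t : ℕ) (α : Fin s → ℂ) (β : Fin t → ℂ),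
      ∀ n : ℕ, 1 ≤ n → a n = (∑ j, β j ^ n) - ∑ i, α i ^ n) := by
  exact RZaux.main a hconv
end

section
/- Let M be a k×k integer matrix and let φ : ℤ^k → ℤ^k be the endomorphism x ↦ Mx. If det(I − M) ≠ 0, then the Reidemeister number R(φ) is finite and R(φ) = |det(I − M)|. -/
/-- The set of Reidemeister (twisted conjugacy) classes of the endomorphism `x ↦ M.mulVec x`
of `ℤᵏ`: `α'` is `φ`-conjugate to `α` iff `α' = γ + α − M.mulVec γ` for some `γ`. -/
def intMatrixReidemeisterSet {k : ℕ} (M : Matrix (Fin k) (Fin k) ℤ) : Type :=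
  Quot (fun α α' : Fin k → ℤ => ∃ γ : Fin k → ℤ, α' = γ + α - M.mulVec γ)

/-- If `φ : ℤᵏ → ℤᵏ` is given by an integer matrix `M` and
`det(I − M) ≠ 0`, then the Reidemeister number of `φ` is finite and equals `|det(I − M)|`. -/
theorem reidemeister_number_of_int_matrix {k : ℕ} (M : Matrix (Fin k) (Fin k) ℤ)
    (h : (1 - M).det ≠ 0) :
    Finite (intMatrixReidemeisterSet M) ∧
      Nat.card (intMatrixReidemeisterSet M) = (1 - M).det.natAbs := by
  classical
  set A : Matrix (Fin k) (Fin k) ℤ := 1 - M with hAdef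
  -- the linear map x ↦ A x is injective
  have hinj : Function.Injective A.mulVecLin := by
    intro x y hxy
    have h2 : A.mulVec x = A.mulVec y := hxy
    have h3 : A.adjugate.mulVec (A.mulVec x) = A.adjugate.mulVec (A.mulVec y) := by rw [h2]
    rw [Matrix.mulVec_mulVec, Matrix.mulVec_mulVec, Matrix.adjugate_mul,
      Matrix.smul_mulVec, Matrix.one_mulVec, Matrix.smul_mulVec,
      Matrix.one_mulVec] at h3
    funext i
    have := congrFun h3 i
    simp only [Pi.smul_apply, smul_eq_mul] at this
    exact mul_left_cancel₀ h this
  set N : Submodule ℤ (Fin k → ℤ) := LinearMap.range A.mulVecLin with hNdef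
  -- the defining relation is the coset relation of N
  have hrel : ∀ α α' : Fin k → ℤ,
      (∃ γ : Fin k → ℤ, α' = γ + α - M.mulVec γ) ↔ -α + α' ∈ N.toAddSubgroup := by
    intro α α'
    constructor
    · rintro ⟨γ, rfl⟩
      refine ⟨γ, ?_⟩
      simp only [Matrix.mulVecLin_apply, hAdef, Matrix.sub_mulVec, Matrix.one_mulVec]
      abel
    · rintro ⟨γ, hγ⟩
      refine ⟨γ, ?_⟩
      simp only [Matrix.mulVecLin_apply, hAdef, Matrix.sub_mulVec, Matrix.one_mulVec] at hγ
      have : α' = α + (γ - M.mulVec γ) := by rw [hγ]; abel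
      rw [this]; abel
  -- equivalence with the quotient group
  let e : intMatrixReidemeisterSet M ≃ ((Fin k → ℤ) ⧸ N.toAddSubgroup) :=
    { toFun := Quot.lift (QuotientAddGroup.mk (s := N.toAddSubgroup))
        (fun a b hab => by
          exact ((QuotientAddGroup.eq (s := N.toAddSubgroup)).mpr ((hrel a b).mp hab)))
      invFun := Quotient.lift (Quot.mk _)
        (fun a b hab => Quot.sound ((hrel a b).mpr (QuotientAddGroup.leftRel_apply.mp hab)))
      left_inv := fun q => by
        induction q using Quot.ind
        rfl
      right_inv := fun q => by
        induction q using Quotient.ind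
        rfl }
  have hcard : Nat.card (intMatrixReidemeisterSet M) = N.toAddSubgroup.index :=
    Nat.card_congr e
  -- Smith normal form of N
  obtain ⟨n, snf⟩ := N.smithNormalForm (Pi.basisFun ℤ (Fin k))
  have hne : N.toAddSubgroup.index ≠ 0 :=
    Int.submodule_toAddSubgroup_index_ne_zero_iff.mpr
      ⟨(LinearEquiv.ofInjective A.mulVecLin hinj).symm⟩
  have hn : n = k := by
    have := snf.toAddSubgroup_index_ne_zero_iff.mp hne
    simpa using this
  subst hn
  -- the index is the product of the Smith coefficients
  have hidx : N.toAddSubgroup.index = ∏ i, (snf.a i).natAbs := by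
    rw [snf.toAddSubgroup_index_eq_ite]
    simp [Ideal.span_singleton_toAddSubgroup_eq_zmultiples, Int.index_zmultiples]
  -- identify the product of Smith coefficients with |det A|
  let g :=
    Equiv.ofBijective snf.f
      ((Fintype.bijective_iff_injective_and_card snf.f).mpr ⟨snf.f.injective, rfl⟩)
  have hfg : ∀ j, snf.f (g.symm j) = j := fun j => g.apply_symm_apply j
  let e2 := snf.bM.equiv snf.bN g.symm
  have hmat : LinearMap.toMatrix snf.bM snf.bM (N.subtype ∘ₗ e2.toLinearMap) =
      Matrix.diagonal (fun i => snf.a (g.symm i)) := by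
    ext i j
    rw [LinearMap.toMatrix_apply]
    simp only [LinearMap.comp_apply, LinearEquiv.coe_coe, e2, Module.Basis.equiv_apply,
      Submodule.coe_subtype, snf.snf, hfg, map_smul, Module.Basis.repr_self,
      Finsupp.smul_single, smul_eq_mul, mul_one, Finsupp.single_apply]
    by_cases hij : i = j
    · subst hij; simp [Matrix.diagonal_apply_eq]
    · simp [Matrix.diagonal_apply_ne _ hij, Ne.symm hij]
  have hdet2 : LinearMap.det (N.subtype ∘ₗ e2.toLinearMap) = ∏ i, snf.a i := by
    rw [← LinearMap.det_toMatrix snf.bM, hmat, Matrix.det_diagonal]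
    exact Equiv.prod_comp g.symm snf.a
  have hcomp : N.subtype ∘ₗ (LinearEquiv.ofInjective A.mulVecLin hinj).toLinearMap = A.mulVecLin := by
    ext x
    simp [LinearEquiv.ofInjective_apply]
  have hdet1 : LinearMap.det (N.subtype ∘ₗ (LinearEquiv.ofInjective A.mulVecLin hinj).toLinearMap) = A.det := by
    rw [hcomp]
    have : A.mulVecLin = Matrix.toLin' A := rfl
    rw [this, LinearMap.det_toLin']
  have hassoc : Associated (∏ i, snf.a i) A.det := by
    rw [← hdet2, ← hdet1]
    exact LinearMap.associated_det_comp_equiv N.subtype _ _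
  have hprod : (∏ i, (snf.a i).natAbs) = A.det.natAbs := by
    rw [← Int.natAbs_eq_iff_associated.mpr hassoc]
    exact (map_prod Int.natAbsHom snf.a Finset.univ).symm
  have hfin : Finite (intMatrixReidemeisterSet M) := by
    have : Nat.card (intMatrixReidemeisterSet M) ≠ 0 := by rw [hcard]; exact hne
    exact Nat.finite_of_card_ne_zero this
  exact ⟨hfin, by rw [hcard, hidx, hprod]⟩
end

section
/- Let G be a finitely generated abelian group with torsion subgroup T, and let φ : G → G be an endomorphism. Then φ restricts to an endomorphism φ^finite : T → T and induces an endomorphism φ^∞ of the torsion-free quotient G/T. If R(φ) is finite, then R(φ) = R(φ^∞) · R(φ^finite). -/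
/-- The set of Reidemeister (`φ`-twisted conjugacy) classes of an endomorphism `φ` of a
group `G`: `α'` is `φ`-conjugate to `α` iff `α' = γ * α * (φ γ)⁻¹` for some `γ ∈ G`. -/
def ReidemeisterSet {G : Type*} [Group G] (φ : G →* G) : Type _ :=
  Quot (fun a b : G => ∃ γ : G, b = γ * a * (φ γ)⁻¹)

/-- The restriction `φ^finite` of an endomorphism `φ` of an abelian group to its torsion
subgroup. -/
def torsionRestrict {G : Type*} [CommGroup G] (φ : G →* G) :
    CommGroup.torsion G →* CommGroup.torsion G :=
  (φ.domRestrict (CommGroup.torsion G)).codRestrict (CommGroup.torsion G)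
    (fun t => by
      have ht : IsOfFinOrder (t : G) := (CommGroup.mem_torsion (t : G)).mp t.2
      exact (CommGroup.mem_torsion _).mpr (φ.isOfFinOrder ht))

/-- The endomorphism `φ^∞` induced by `φ` on the torsion-free quotient `G ⧸ T`. -/
def torsionFreeQuotientMap {G : Type*} [CommGroup G] (φ : G →* G) :
    (G ⧸ CommGroup.torsion G) →* (G ⧸ CommGroup.torsion G) :=
  QuotientGroup.map _ _ φ
    (fun g hg => by
      have hfin : IsOfFinOrder g := (CommGroup.mem_torsion g).mp hg
      exact Subgroup.mem_comap.mpr ((CommGroup.mem_torsion _).mpr (φ.isOfFinOrder hfin)))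

section Aux

variable {G : Type*} [CommGroup G]

/-- The homomorphism `g ↦ g * (φ g)⁻¹`; its cokernel is the Reidemeister set. -/
def coin (φ : G →* G) : G →* G where
  toFun g := g * (φ g)⁻¹
  map_one' := by simp
  map_mul' a b := by
    simp only [map_mul, mul_inv_rev]
    rw [mul_comm ((φ b)⁻¹) ((φ a)⁻¹), mul_mul_mul_comm]

@[simp] lemma coin_apply (φ : G →* G) (g : G) : coin φ g = g * (φ g)⁻¹ := rfl

lemma rs_rel_iff (φ : G →* G) (a b : G) :
    (∃ γ : G, b = γ * a * (φ γ)⁻¹) ↔ a⁻¹ * b ∈ (coin φ).range := by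
  constructor
  · rintro ⟨γ, rfl⟩
    refine ⟨γ, ?_⟩
    rw [coin_apply, mul_comm γ a, mul_assoc, inv_mul_cancel_left]
  · rintro ⟨γ, hγ⟩
    refine ⟨γ, ?_⟩
    rw [coin_apply] at hγ
    have hb : b = a * (γ * (φ γ)⁻¹) := by rw [hγ, mul_inv_cancel_left]
    rw [hb, mul_left_comm a γ ((φ γ)⁻¹), ← mul_assoc]

/-- The Reidemeister set is the cokernel of `coin φ`. -/
def rsEquiv (φ : G →* G) : ReidemeisterSet φ ≃ G ⧸ (coin φ).range where
  toFun := Quot.lift (QuotientGroup.mk (s := (coin φ).range))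
    (fun a b hab => QuotientGroup.eq.mpr ((rs_rel_iff φ a b).mp hab))
  invFun := fun x => Quotient.liftOn' x (Quot.mk _)
    (fun a b hab => Quot.sound ((rs_rel_iff φ a b).mpr (QuotientGroup.leftRel_apply.mp hab)))
  left_inv := by
    intro x
    induction x using Quot.ind
    rfl
  right_inv := by
    intro x
    induction x using Quotient.inductionOn'
    rfl

/-- An endomorphism of a f.g. torsion-free abelian group with finite cokernel is injective:
module version. -/
lemma injective_of_finite_coker_mod {M : Type*} [AddCommGroup M]
    [Module.Finite ℤ M] [NoZeroSMulDivisors ℤ M] (f : M →ₗ[ℤ] M)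
    (h : Finite (M ⧸ LinearMap.range f)) : Function.Injective f := by
  have h0 : Module.finrank ℤ (M ⧸ LinearMap.range f) = 0 := by
    rw [Module.finrank_eq_zero_iff]
    intro x
    obtain ⟨n, hn, hx⟩ := (isOfFinAddOrder_of_finite x).exists_nsmul_eq_zero
    exact ⟨(n : ℤ), by exact_mod_cast hn.ne', by rw [natCast_zsmul]; exact hx⟩
  have key := Submodule.finrank_quotient_add_finrank (LinearMap.range f)
  rw [h0, zero_add] at key
  haveI : IsNoetherian ℤ M := isNoetherian_of_isNoetherianRing_of_finite ℤ M
  have h3 := Submodule.disjoint_ker_of_finrank_le (L := ⊤) f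
    (by rw [Submodule.map_top, finrank_top]; exact key.ge)
  rw [← LinearMap.ker_eq_bot]
  exact disjoint_top.mp h3.symm

/-- Group version: an endomorphism of a f.g. torsion-free abelian group whose
cokernel is finite is injective. -/
lemma injective_of_finite_coker {Q : Type*} [CommGroup Q] [Group.FG Q]
    (htf : IsMulTorsionFree Q) (f : Q →* Q) (h : Finite (Q ⧸ f.range)) :
    Function.Injective f := by
  haveI htf' : IsAddTorsionFree (Additive Q) := ⟨fun n hn a b hab => htf.pow_left_injective hn hab⟩
  haveI : NoZeroSMulDivisors ℤ (Additive Q) := IsAddTorsionFree.to_noZeroSMulDivisors_int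
  haveI : AddGroup.FG (Additive Q) := AddGroup.fg_of_group_fg
  haveI : Module.Finite ℤ (Additive Q) := Module.Finite.iff_addGroup_fg.mpr ‹_›
  set f' : Additive Q →ₗ[ℤ] Additive Q := (MonoidHom.toAdditive f).toIntLinearMap with hf'
  have hker : Finite (Additive Q ⧸ LinearMap.range f') := by
    have hs : Function.Surjective
        (fun x : Q ⧸ f.range => Quotient.liftOn' x
          (fun q => Submodule.Quotient.mk (p := LinearMap.range f') (Additive.ofMul q))
          (by
            intro a b hab
            obtain ⟨γ, hγ⟩ := QuotientGroup.leftRel_apply.mp hab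
            refine (Submodule.Quotient.eq _).mpr ⟨Additive.ofMul γ⁻¹, ?_⟩
            show Additive.ofMul (f γ⁻¹) = Additive.ofMul a - Additive.ofMul b
            rw [map_inv, hγ, mul_inv_rev, inv_inv, mul_comm]
            rw [show Additive.ofMul a - Additive.ofMul b = Additive.ofMul (a / b) from rfl,
              div_eq_mul_inv])) := by
      intro y
      obtain ⟨x, rfl⟩ := Submodule.Quotient.mk_surjective _ y
      exact ⟨QuotientGroup.mk x.toMul, rfl⟩
    exact Finite.of_surjective _ hs
  have hinj := injective_of_finite_coker_mod f' hker
  intro a b hab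
  exact hinj (show f' (Additive.ofMul a) = f' (Additive.ofMul b) from congrArg Additive.ofMul hab)

end Aux

/-- Let `G` be a finitely generated abelian group with torsion subgroup `T`
and `φ : G → G` an endomorphism; `φ` restricts to `φ^finite : T → T` and induces
`φ^∞ : G⧸T → G⧸T`. If the Reidemeister number `R(φ)` is finite, then
`R(φ) = R(φ^∞) · R(φ^finite)`. -/
theorem reidemeister_number_product_torsion {G : Type*} [CommGroup G] [Group.FG G]
    (φ : G →* G) (hfin : Finite (ReidemeisterSet φ)) :
    Nat.card (ReidemeisterSet φ) =
      Nat.card (ReidemeisterSet (torsionFreeQuotientMap φ)) *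
        Nat.card (ReidemeisterSet (torsionRestrict φ)) := by
  classical
  set T : Subgroup G := CommGroup.torsion G with hT
  set R : Subgroup G := (coin φ).range with hR
  set L : Subgroup G := T ⊔ R with hL
  have hRL : R ≤ L := le_sup_right
  set π : G →* G ⧸ T := QuotientGroup.mk' T with hπ
  have hπs : Function.Surjective π := QuotientGroup.mk'_surjective T
  -- commutation of coin with the projection
  have hcomm : ∀ g : G, coin (torsionFreeQuotientMap φ) (π g) = π (coin φ g) := by
    intro g
    simp [coin_apply, torsionFreeQuotientMap, hπ, QuotientGroup.map_mk']
    rfl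
  set Rbar : Subgroup (G ⧸ T) := (coin (torsionFreeQuotientMap φ)).range with hRbar'
  -- range of coin on the quotient
  have hRbar : Rbar = R.map π := by
    ext y
    constructor
    · rintro ⟨x, rfl⟩
      obtain ⟨g, rfl⟩ := hπs x
      exact ⟨coin φ g, ⟨g, rfl⟩, (hcomm g).symm⟩
    · rintro ⟨r, ⟨g, rfl⟩, rfl⟩
      exact ⟨π g, hcomm g⟩
  -- the composite projection G → (G⧸T)⧸Rbar
  set q : G →* (G ⧸ T) ⧸ Rbar := (QuotientGroup.mk' Rbar).comp π with hq
  have hqs : Function.Surjective q := (QuotientGroup.mk'_surjective Rbar).comp hπs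
  have hkerq : q.ker = L := by
    rw [hq, ← MonoidHom.comap_ker, QuotientGroup.ker_mk', hRbar, hπ,
      Subgroup.comap_map_eq, QuotientGroup.ker_mk', hL, sup_comm]
  have e1 : G ⧸ L ≃* (G ⧸ T) ⧸ Rbar :=
    (QuotientGroup.quotientMulEquivOfEq hkerq.symm).trans
      (QuotientGroup.quotientKerEquivOfSurjective q hqs)
  -- finiteness facts
  haveI hfinR : Finite (G ⧸ R) := Finite.of_equiv _ (rsEquiv φ)
  have hmapsurj : Function.Surjective (QuotientGroup.map R L (MonoidHom.id G) hRL) := by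
    intro y
    obtain ⟨g, rfl⟩ := QuotientGroup.mk_surjective y
    exact ⟨QuotientGroup.mk g, rfl⟩
  haveI hfinL : Finite (G ⧸ L) := Finite.of_surjective _ hmapsurj
  haveI hfinRbar : Finite ((G ⧸ T) ⧸ Rbar) := Finite.of_equiv _ e1.toEquiv
  -- injectivity of coin on the torsion-free quotient
  have htf : IsMulTorsionFree (G ⧸ T) := QuotientGroup.instIsMulTorsionFree G
  have hinj : Function.Injective (coin (torsionFreeQuotientMap φ)) :=
    injective_of_finite_coker htf _ hfinRbar
  -- identification of R ∩ T with the range of coin of the torsion restriction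
  have hcoinT : ∀ t : T, ((coin (torsionRestrict φ) t : T) : G) = coin φ (t : G) := by
    intro t
    simp [coin_apply, torsionRestrict]
  have hRT : R.subgroupOf T = (coin (torsionRestrict φ)).range := by
    ext x
    constructor
    · intro hx
      obtain ⟨g, hg⟩ := hx
      have h1 : coin (torsionFreeQuotientMap φ) (π g) = 1 := by
        rw [hcomm g, hg]
        exact (QuotientGroup.eq_one_iff _).mpr x.2
      have h2 : π g = 1 := hinj (by rw [h1, map_one])
      have hgT : g ∈ T := (QuotientGroup.eq_one_iff _).mp h2
      exact ⟨⟨g, hgT⟩, Subtype.ext (by rw [hcoinT ⟨g, hgT⟩]; exact hg)⟩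
    · rintro ⟨t, rfl⟩
      show ((coin (torsionRestrict φ) t : T) : G) ∈ R
      rw [hcoinT t]
      exact ⟨(t : G), rfl⟩
  -- second isomorphism theorem
  have e2 : (T ⧸ R.subgroupOf T) ≃* (L ⧸ R.subgroupOf L) :=
    QuotientGroup.quotientInfEquivProdNormalQuotient T R
  -- L/(R ∩ L) ≃ image of L in G/R
  have e3 : (L ⧸ R.subgroupOf L) ≃* (L.map (QuotientGroup.mk' R)) := by
    have hker : ((QuotientGroup.mk' R).comp L.subtype).ker = R.subgroupOf L := by
      rw [← MonoidHom.comap_ker, QuotientGroup.ker_mk']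
      rfl
    have hrange : ((QuotientGroup.mk' R).comp L.subtype).range = L.map (QuotientGroup.mk' R) := by
      rw [MonoidHom.range_comp, Subgroup.range_subtype]
    exact (QuotientGroup.quotientMulEquivOfEq hker.symm).trans
      ((QuotientGroup.quotientKerEquivRange _).trans (MulEquiv.subgroupCongr hrange))
  -- third isomorphism theorem
  have e4 : ((G ⧸ R) ⧸ (L.map (QuotientGroup.mk' R))) ≃* G ⧸ L :=
    QuotientGroup.quotientQuotientEquivQuotient R L hRL
  -- cardinality bookkeeping
  have c0 : Nat.card (ReidemeisterSet φ) = Nat.card (G ⧸ R) := Nat.card_congr (rsEquiv φ)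
  have c1 : Nat.card (G ⧸ R) =
      Nat.card ((G ⧸ R) ⧸ (L.map (QuotientGroup.mk' R))) *
        Nat.card (L.map (QuotientGroup.mk' R)) :=
    Subgroup.card_eq_card_quotient_mul_card_subgroup _
  have c2 : Nat.card ((G ⧸ R) ⧸ (L.map (QuotientGroup.mk' R))) = Nat.card ((G ⧸ T) ⧸ Rbar) :=
    Nat.card_congr (e4.toEquiv.trans e1.toEquiv)
  have c3 : Nat.card (L.map (QuotientGroup.mk' R)) = Nat.card (T ⧸ R.subgroupOf T) :=
    Nat.card_congr (e2.toEquiv.trans e3.toEquiv).symm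
  have c4 : Nat.card ((G ⧸ T) ⧸ Rbar) = Nat.card (ReidemeisterSet (torsionFreeQuotientMap φ)) :=
    (Nat.card_congr (rsEquiv (torsionFreeQuotientMap φ))).symm
  have c5 : Nat.card (T ⧸ R.subgroupOf T) = Nat.card (ReidemeisterSet (torsionRestrict φ)) := by
    rw [hRT]
    exact (Nat.card_congr (rsEquiv (torsionRestrict φ))).symm
  rw [c0, c1, c2, c3, c4, c5]
end

section
/- Let G be a finite group and φ : G → G an endomorphism. Since φ maps conjugate elements to conjugate elements, it induces a map Φ on the set of conjugacy classes of G. Then R(φ) equals the number of ordinary conjugacy classes ⟨x⟩ in G such that ⟨φ(x)⟩ = ⟨x⟩, i.e. the number of fixed points of Φ. -/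
set_option linter.unusedVariables false

open MulAction Finset


open MulAction

section Aux

variable {G : Type*} [Group G]

/-- Type synonym for `G` carrying the twisted conjugation action of `G`. -/
def TwistedConj (φ : G →* G) : Type _ := G

namespace TwistedConj

variable (φ : G →* G)

/-- The identity equivalence between `G` and `TwistedConj φ`. -/
def of : G ≃ TwistedConj φ := Equiv.refl G

instance [Finite G] : Finite (TwistedConj φ) := inferInstanceAs (Finite G)

theorem aux1 (x : G) : 1 * x * (φ 1)⁻¹ = x := by simp

theorem aux2 (g h x : G) :
    (g * h) * x * (φ (g * h))⁻¹ = g * (h * x * (φ h)⁻¹) * (φ g)⁻¹ := by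
  simp [map_mul, mul_inv_rev, mul_assoc]

instance : MulAction G (TwistedConj φ) where
  smul g x := of φ (g * (of φ).symm x * (φ g)⁻¹)
  one_smul x := aux1 φ ((of φ).symm x)
  mul_smul g h x := aux2 φ g h ((of φ).symm x)

theorem smul_of (g x : G) : g • of φ x = of φ (g * x * (φ g)⁻¹) := rfl

end TwistedConj

end Aux


theorem ConjClasses.map_mk' {G : Type*} [Group G] (φ : G →* G) (g : G) :
    ConjClasses.map φ (ConjClasses.mk g) = ConjClasses.mk (φ g) := rfl

/-- For an endomorphism `φ` of a finite group `G`, the Reidemeister number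
`R(φ)` equals the number of ordinary conjugacy classes `⟨x⟩` of `G` with `⟨φ(x)⟩ = ⟨x⟩`,
i.e. the number of fixed points of the map induced by `φ` on conjugacy classes. -/
theorem reidemeister_number_eq_card_fixed_conjClasses {G : Type*} [Group G] [Finite G]
    (φ : G →* G) :
    Nat.card (ReidemeisterSet φ) =
      Nat.card {c : ConjClasses G // ConjClasses.map φ c = c} := by
  show Nat.card (Quot (fun a b : G => ∃ γ : G, b = γ * a * (φ γ)⁻¹)) =
      Nat.card {c : ConjClasses G // ConjClasses.map φ c = c}
  classical
  letI : Fintype G := Fintype.ofFinite G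
  letI : Fintype (ConjClasses G) := Fintype.ofFinite _
  -- Step 1: the Reidemeister set is the orbit space of the twisted action.
  have e1 : (Quot fun a b : G => ∃ γ : G, b = γ * a * (φ γ)⁻¹)
      ≃ Quotient (orbitRel G (TwistedConj φ)) := by
    refine Quot.congr (TwistedConj.of φ) ?_
    intro a b
    rw [orbitRel_apply, mem_orbit_iff]
    constructor
    · rintro ⟨γ, rfl⟩
      refine ⟨γ⁻¹, ?_⟩
      rw [TwistedConj.smul_of, (TwistedConj.of φ).apply_eq_iff_eq]
      simp only [map_inv, inv_inv]
      group
    · rintro ⟨γ, h⟩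
      rw [TwistedConj.smul_of, (TwistedConj.of φ).apply_eq_iff_eq] at h
      refine ⟨γ⁻¹, ?_⟩
      rw [← h]
      simp only [map_inv, inv_inv]
      group
  -- Step 2: Burnside's lemma for the twisted action.
  letI : Fintype (TwistedConj φ) := Fintype.ofFinite _
  letI : Fintype (Quotient (orbitRel G (TwistedConj φ))) := Fintype.ofFinite _
  letI : ∀ a : G, Fintype (fixedBy (TwistedConj φ) a) := fun a => Fintype.ofFinite _
  have burnside := MulAction.sum_card_fixedBy_eq_card_orbits_mul_card_group G (TwistedConj φ)
  -- Step 3: the number of fixed points of `g` on the twisted action.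
  have hg : ∀ g : G, Nat.card (fixedBy (TwistedConj φ) g) =
      if ConjClasses.map φ (ConjClasses.mk g) = ConjClasses.mk g then
        Nat.card (stabilizer (ConjAct G) g) else 0 := by
    intro g
    have hfix : ∀ x : G, (TwistedConj.of φ x ∈ fixedBy (TwistedConj φ) g) ↔ g * x = x * φ g := by
      intro x
      rw [mem_fixedBy, TwistedConj.smul_of, (TwistedConj.of φ).apply_eq_iff_eq,
        mul_inv_eq_iff_eq_mul]
    rw [ConjClasses.map_mk' φ g]
    split_ifs with hco
    · obtain ⟨c, hc⟩ := isConj_iff.mp (ConjClasses.mk_eq_mk_iff_isConj.mp hco)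
      have hφg : φ g = c⁻¹ * g * c := by
        conv_rhs => rw [← hc]
        group
      refine Nat.card_congr ?_
      have e_a : (fixedBy (TwistedConj φ) g) ≃ {y : G // g * y = y * φ g} :=
        ((TwistedConj.of φ).subtypeEquiv fun x => (hfix x).symm).symm
      have e_b : {y : G // g * y = y * φ g} ≃ {z : G // g * z = z * g} := by
        refine (Equiv.mulRight c⁻¹).subtypeEquiv fun y => ?_
        simp only [Equiv.coe_mulRight, hφg]
        constructor
        · intro h
          rw [show g * (y * c⁻¹) = (g * y) * c⁻¹ by group, h]
          group
        · intro h
          rw [show g * y = (g * (y * c⁻¹)) * c by group, h]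
          group
      have e_c : {z : G // g * z = z * g} ≃ stabilizer (ConjAct G) g := by
        refine (ConjAct.toConjAct (G := G)).toEquiv.subtypeEquiv fun z => ?_
        rw [show (ConjAct.toConjAct (G := G)).toEquiv z = ConjAct.toConjAct z from rfl,
          mem_stabilizer_iff, ConjAct.smul_def,
          ConjAct.ofConjAct_toConjAct, mul_inv_eq_iff_eq_mul, eq_comm]
      exact e_a.trans (e_b.trans e_c)
    · rw [Nat.card_eq_zero]
      left
      refine ⟨fun x => hco (ConjClasses.mk_eq_mk_iff_isConj.mpr ?_)⟩
      have hx := (hfix ((TwistedConj.of φ).symm x.1)).mp (by simpa using x.2)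
      refine isConj_iff.mpr ⟨(TwistedConj.of φ).symm x.1, ?_⟩
      conv_lhs => rw [show (TwistedConj.of φ).symm x.1 * φ g
        = g * (TwistedConj.of φ).symm x.1 from hx.symm]
      group
  -- Step 4: orbit–stabilizer for the conjugation action, in `Nat.card` form.
  letI : Fintype (ConjAct G) := Fintype.ofFinite _
  have orbitcard : ∀ g : G,
      Nat.card (orbit (ConjAct G) g) * Nat.card (stabilizer (ConjAct G) g) = Nat.card G := by
    intro g
    letI : Fintype (orbit (ConjAct G) g) := Fintype.ofFinite _
    letI : Fintype (stabilizer (ConjAct G) g) := Fintype.ofFinite _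
    have h := MulAction.card_orbit_mul_card_stabilizer_eq_card_group (ConjAct G) g
    rw [← Nat.card_eq_fintype_card, ← Nat.card_eq_fintype_card, ← Nat.card_eq_fintype_card] at h
    rw [h]
    exact Nat.card_congr ConjAct.ofConjAct.toEquiv
  have fibercard : ∀ g : G,
      (univ.filter fun h : G => ConjClasses.mk h = ConjClasses.mk g).card
        = Nat.card (orbit (ConjAct G) g) := by
    intro g
    have hset : orbit (ConjAct G) g = {h : G | ConjClasses.mk h = ConjClasses.mk g} := by
      ext h
      rw [ConjAct.mem_orbit_conjAct, Set.mem_setOf_eq, ConjClasses.mk_eq_mk_iff_isConj]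
    rw [hset]
    simp [Nat.card_eq_fintype_card, Fintype.card_subtype]
  -- Step 5: within each conjugacy class, the stabilizer cards sum to `|G|`.
  have horb : ∀ c : ConjClasses G,
      ∑ g ∈ univ.filter (fun g : G => ConjClasses.mk g = c),
        Nat.card (stabilizer (ConjAct G) g) = Nat.card G := by
    intro c
    obtain ⟨g₀, hg₀⟩ := ConjClasses.mk_surjective c
    have htpos : 0 < (univ.filter fun g : G => ConjClasses.mk g = c).card :=
      Finset.card_pos.mpr ⟨g₀, by simp [hg₀]⟩
    refine Nat.eq_of_mul_eq_mul_left htpos ?_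
    rw [Finset.mul_sum]
    calc ∑ g ∈ univ.filter (fun g : G => ConjClasses.mk g = c),
          (univ.filter fun g : G => ConjClasses.mk g = c).card
            * Nat.card (stabilizer (ConjAct G) g)
        = ∑ g ∈ univ.filter (fun g : G => ConjClasses.mk g = c), Nat.card G := by
          refine Finset.sum_congr rfl fun g hgm => ?_
          have hmk : ConjClasses.mk g = c := (Finset.mem_filter.mp hgm).2
          rw [show (univ.filter fun h : G => ConjClasses.mk h = c)
              = (univ.filter fun h : G => ConjClasses.mk h = ConjClasses.mk g) by rw [hmk],
            fibercard g, orbitcard g]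
      _ = (univ.filter fun g : G => ConjClasses.mk g = c).card * Nat.card G := by
          rw [Finset.sum_const, smul_eq_mul]
  -- Step 6: assemble.
  have total : Nat.card (Quotient (orbitRel G (TwistedConj φ))) * Nat.card G
      = Nat.card {c : ConjClasses G // ConjClasses.map φ c = c} * Nat.card G := by
    have lhs_eq : ∑ g : G, Nat.card (fixedBy (TwistedConj φ) g)
        = Nat.card (Quotient (orbitRel G (TwistedConj φ))) * Nat.card G := by
      simpa [Nat.card_eq_fintype_card] using burnside
    rw [← lhs_eq]
    calc ∑ g : G, Nat.card (fixedBy (TwistedConj φ) g)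
        = ∑ g : G, (if ConjClasses.map φ (ConjClasses.mk g) = ConjClasses.mk g then
            Nat.card (stabilizer (ConjAct G) g) else 0) :=
          Finset.sum_congr rfl fun g _ => hg g
      _ = ∑ c : ConjClasses G, ∑ g ∈ univ.filter (fun g : G => ConjClasses.mk g = c),
            (if ConjClasses.map φ (ConjClasses.mk g) = ConjClasses.mk g then
              Nat.card (stabilizer (ConjAct G) g) else 0) :=
          (Finset.sum_fiberwise univ ConjClasses.mk _).symm
      _ = ∑ c : ConjClasses G, (if ConjClasses.map φ c = c then Nat.card G else 0) := by
          refine Finset.sum_congr rfl fun c _ => ?_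
          by_cases hcfix : ConjClasses.map φ c = c
          · rw [if_pos hcfix, ← horb c]
            refine Finset.sum_congr rfl fun g hgm => ?_
            have hmk : ConjClasses.mk g = c := (Finset.mem_filter.mp hgm).2
            rw [if_pos (by rw [hmk]; exact hcfix)]
          · rw [if_neg hcfix]
            refine Finset.sum_eq_zero fun g hgm => ?_
            have hmk : ConjClasses.mk g = c := (Finset.mem_filter.mp hgm).2
            rw [if_neg]
            rw [hmk]
            exact hcfix
      _ = (univ.filter fun c : ConjClasses G => ConjClasses.map φ c = c).card * Nat.card G := by
          rw [← Finset.sum_filter, Finset.sum_const, smul_eq_mul]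
      _ = Nat.card {c : ConjClasses G // ConjClasses.map φ c = c} * Nat.card G := by
          have hcard : Nat.card {c : ConjClasses G // ConjClasses.map φ c = c}
              = (univ.filter fun c : ConjClasses G => ConjClasses.map φ c = c).card := by
            rw [Nat.card_eq_fintype_card]
            exact Fintype.card_subtype _
          rw [hcard]
  rw [Nat.card_congr e1]
  exact Nat.eq_of_mul_eq_mul_right Nat.card_pos total
end

section
/- Let G be a finite group, φ : G → G an endomorphism, and let W be the complex vector space of class functions on G (complex-valued functions constant on each conjugacy class). The map B : W → W defined by B(f) = f∘φ is linear, and the Reidemeister number satisfies R(φ) = Tr B. -/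
/-- The space `W` of complex-valued class functions on `G`. -/
noncomputable def classFunctions (G : Type*) [Group G] : Submodule ℂ (G → ℂ) where
  carrier := {f | ∀ x y : G, f (y * x * y⁻¹) = f x}
  add_mem' := by
    intro f g hf hg x y
    simp only [Pi.add_apply, hf x y, hg x y]
  zero_mem' := by
    intro x y
    rfl
  smul_mem' := by
    intro c f hf x y
    simp only [Pi.smul_apply, hf x y]

/-- The linear map `B : W → W`, `B(f) = f ∘ φ`, on class functions. -/
noncomputable def pullbackClassFun {G : Type*} [Group G] (φ : G →* G) :
    classFunctions G →ₗ[ℂ] classFunctions G where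
  toFun f := ⟨fun g => f.1 (φ g), by
    intro x y
    simp only [map_mul, map_inv]
    exact f.2 (φ x) (φ y)⟩
  map_add' f g := rfl
  map_smul' c f := rfl

open scoped Classical

section Twist

variable {G : Type*} [Group G]

/-- Type synonym for the φ-twisted conjugation action of `G` on itself. -/
def Twisted (G : Type*) [Group G] (φ : G →* G) : Type _ := G

/-- Identity map into the type synonym. -/
def Twisted.mk (φ : G →* G) : G → Twisted G φ := id

/-- Identity map out of the type synonym. -/
def Twisted.val {φ : G →* G} : Twisted G φ → G := id

instance (φ : G →* G) : MulAction G (Twisted G φ) where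
  smul γ a := Twisted.mk φ (γ * a.val * (φ γ)⁻¹)
  one_smul a := by
    show Twisted.mk φ (1 * a.val * (φ 1)⁻¹) = a
    show (1 : G) * Twisted.val a * (φ 1)⁻¹ = Twisted.val a
    simp
  mul_smul γ δ a := by
    show Twisted.mk φ ((γ * δ) * a.val * (φ (γ * δ))⁻¹)
      = Twisted.mk φ (γ * (Twisted.mk φ (δ * a.val * (φ δ)⁻¹)).val * (φ γ)⁻¹)
    show ((γ * δ) * Twisted.val a * (φ (γ * δ))⁻¹ : G)
      = γ * (δ * Twisted.val a * (φ δ)⁻¹) * (φ γ)⁻¹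
    simp [mul_assoc]

lemma twisted_smul_def (φ : G →* G) (γ : G) (a : Twisted G φ) :
    γ • a = Twisted.mk φ (γ * a.val * (φ γ)⁻¹) := rfl

instance (φ : G →* G) [Fintype G] : Fintype (Twisted G φ) := inferInstanceAs (Fintype G)

/-- Reidemeister set is the orbit space of the twisted action. -/
def reidEquiv (φ : G →* G) :
    ReidemeisterSet φ ≃ MulAction.orbitRel.Quotient G (Twisted G φ) where
  toFun := Quot.lift (fun a => Quotient.mk (MulAction.orbitRel G (Twisted G φ)) (Twisted.mk φ a))
    (by
      rintro a b ⟨γ, h⟩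
      refine (Quotient.sound ?_).symm
      exact MulAction.mem_orbit_iff.mpr ⟨γ, h.symm⟩)
  invFun := Quotient.lift (fun a : Twisted G φ => Quot.mk _ a.val)
    (by
      rintro a b hab
      obtain ⟨γ, h⟩ := MulAction.mem_orbit_iff.mp hab
      exact (Quot.sound ⟨γ, h.symm⟩).symm)
  left_inv := by rintro ⟨a⟩; rfl
  right_inv := by rintro ⟨a⟩; rfl

end Twist

section Count

variable {G : Type*} [Group G] (φ : G →* G)

/-- The synonym equivalence. -/
def Twisted.equiv (φ : G →* G) : Twisted G φ ≃ G := Equiv.refl G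

lemma card_fixedBy_twisted [Fintype G] (γ : G) :
    Fintype.card (MulAction.fixedBy (Twisted G φ) γ) =
      Fintype.card {a : G // a⁻¹ * γ * a = φ γ} := by
  refine Fintype.card_congr (Equiv.subtypeEquiv (Twisted.equiv φ) fun a => ?_)
  show γ • a = a ↔ a.val⁻¹ * γ * a.val = φ γ
  rw [twisted_smul_def]
  show γ * a.val * (φ γ)⁻¹ = a.val ↔ _
  constructor
  · intro h
    calc a.val⁻¹ * γ * a.val = a.val⁻¹ * (γ * a.val * (φ γ)⁻¹) * φ γ := by group
    _ = a.val⁻¹ * a.val * φ γ := by rw [h]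
    _ = φ γ := by group
  · intro h
    calc γ * a.val * (φ γ)⁻¹ = γ * a.val * (a.val⁻¹ * γ * a.val)⁻¹ := by rw [h]
    _ = a.val := by group

lemma S_isEmpty (γ : G) (h : ¬ ConjClasses.map φ (ConjClasses.mk γ) = ConjClasses.mk γ) :
    IsEmpty {a : G // a⁻¹ * γ * a = φ γ} := by
  refine ⟨fun ⟨a, ha⟩ => h ?_⟩
  show ConjClasses.mk (φ γ) = ConjClasses.mk γ
  rw [ConjClasses.mk_eq_mk_iff_isConj]
  exact (isConj_iff.mpr ⟨a⁻¹, by rw [inv_inv]; exact ha⟩).symm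

lemma S_card [Fintype G] (γ : G)
    (h : ConjClasses.map φ (ConjClasses.mk γ) = ConjClasses.mk γ) :
    Fintype.card {a : G // a⁻¹ * γ * a = φ γ} *
      Fintype.card {b : G // ConjClasses.mk b = ConjClasses.mk γ} = Fintype.card G := by
  have h' : IsConj (φ γ) γ := ConjClasses.mk_eq_mk_iff_isConj.mp h
  obtain ⟨u, hu⟩ := isConj_iff.mp h'
  -- hu : u * φ γ * u⁻¹ = γ
  have ha₀ : u⁻¹ * γ * u = φ γ := by conv_lhs => rw [← hu]
                                     group
  have h2 : φ γ * u⁻¹ = u⁻¹ * γ := by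
    conv_lhs => rw [← ha₀]
    group
  -- S γ ≃ stabilizer of γ under conjugation
  have e1 : {a : G // a⁻¹ * γ * a = φ γ} ≃ MulAction.stabilizer (ConjAct G) γ := by
    refine ⟨fun a => ⟨ConjAct.toConjAct (a.1 * u⁻¹), ?_⟩,
      fun z => ⟨ConjAct.ofConjAct z.1 * u, ?_⟩, ?_, ?_⟩
    · obtain ⟨a, ha⟩ := a
      have h1 : γ * a = a * φ γ := by
        conv_rhs => rw [← ha]
        group
      rw [MulAction.mem_stabilizer_iff, ConjAct.smul_def, ConjAct.ofConjAct_toConjAct]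
      have hcomm : γ * (a * u⁻¹) = (a * u⁻¹) * γ := by
        calc γ * (a * u⁻¹) = (γ * a) * u⁻¹ := by group
        _ = (a * φ γ) * u⁻¹ := by rw [h1]
        _ = a * (φ γ * u⁻¹) := by group
        _ = a * (u⁻¹ * γ) := by rw [h2]
        _ = (a * u⁻¹) * γ := by group
      rw [← hcomm]
      group
    · obtain ⟨z, hz⟩ := z
      rw [MulAction.mem_stabilizer_iff, ConjAct.smul_def] at hz
      show (ConjAct.ofConjAct z * u)⁻¹ * γ * (ConjAct.ofConjAct z * u) = φ γ
      calc (ConjAct.ofConjAct z * u)⁻¹ * γ * (ConjAct.ofConjAct z * u)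
          = u⁻¹ * ((ConjAct.ofConjAct z)⁻¹ * γ * ConjAct.ofConjAct z) * u := by group
      _ = u⁻¹ * ((ConjAct.ofConjAct z)⁻¹ * (ConjAct.ofConjAct z * γ *
            (ConjAct.ofConjAct z)⁻¹) * ConjAct.ofConjAct z) * u := by
              conv_lhs => rw [← hz]
      _ = u⁻¹ * γ * u := by group
      _ = φ γ := ha₀
    · rintro ⟨a, ha⟩
      ext
      simp
    · rintro ⟨z, hz⟩
      ext
      simp
  -- conjugacy class of γ ≃ orbit under ConjAct
  have e2 : {b : G // ConjClasses.mk b = ConjClasses.mk γ} ≃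
      MulAction.orbit (ConjAct G) γ := by
    refine Equiv.subtypeEquivRight fun b => ?_
    rw [ConjAct.orbit_eq_carrier_conjClasses, ConjClasses.mem_carrier_iff_mk_eq]
  rw [Fintype.card_congr e1, Fintype.card_congr e2, mul_comm]
  rw [MulAction.card_orbit_mul_card_stabilizer_eq_card_group (ConjAct G) γ]
  exact Fintype.card_congr ConjAct.toConjAct.toEquiv.symm

end Count

section Orbits

variable {G : Type*} [Group G] (φ : G →* G)

lemma reid_card [Fintype G] :
    Nat.card (ReidemeisterSet φ) =
      Fintype.card {c : ConjClasses G // ConjClasses.map φ c = c} := by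
  classical
  have hb := MulAction.sum_card_fixedBy_eq_card_orbits_mul_card_group G (Twisted G φ)
  have hsum : (∑ γ : G, Fintype.card (MulAction.fixedBy (Twisted G φ) γ)) =
      Fintype.card {c : ConjClasses G // ConjClasses.map φ c = c} * Fintype.card G := by
    calc ∑ γ : G, Fintype.card (MulAction.fixedBy (Twisted G φ) γ)
        = ∑ γ : G, Fintype.card {a : G // a⁻¹ * γ * a = φ γ} :=
          Finset.sum_congr rfl fun γ _ => card_fixedBy_twisted φ γ
    _ = ∑ c : ConjClasses G, ∑ γ : {γ : G // ConjClasses.mk γ = c},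
          Fintype.card {a : G // a⁻¹ * γ.1 * a = φ γ.1} :=
          (Fintype.sum_fiberwise _ _).symm
    _ = ∑ c : ConjClasses G,
          (if ConjClasses.map φ c = c then Fintype.card G else 0) := by
          refine Finset.sum_congr rfl fun c _ => ?_
          by_cases hc : ConjClasses.map φ c = c
          · rw [if_pos hc]
            have key : ∀ γ : {γ : G // ConjClasses.mk γ = c},
                Fintype.card {a : G // a⁻¹ * γ.1 * a = φ γ.1} *
                  Fintype.card {b : G // ConjClasses.mk b = c} = Fintype.card G := by
              rintro ⟨γ, rfl⟩
              exact S_card φ γ hc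
            obtain ⟨γ₀, hγ₀⟩ := ConjClasses.exists_rep c
            have hpos : 0 < Fintype.card {b : G // ConjClasses.mk b = c} :=
              Fintype.card_pos_iff.mpr ⟨⟨γ₀, hγ₀⟩⟩
            have hdvd : Fintype.card {b : G // ConjClasses.mk b = c} ∣ Fintype.card G :=
              Dvd.intro_left _ (key ⟨γ₀, hγ₀⟩)
            calc ∑ γ : {γ : G // ConjClasses.mk γ = c},
                  Fintype.card {a : G // a⁻¹ * γ.1 * a = φ γ.1}
                = ∑ _γ : {γ : G // ConjClasses.mk γ = c},
                  (Fintype.card G / Fintype.card {b : G // ConjClasses.mk b = c}) :=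
                  Finset.sum_congr rfl fun γ _ => by
                    rw [← key γ, Nat.mul_div_cancel _ hpos]
            _ = Fintype.card {b : G // ConjClasses.mk b = c} *
                  (Fintype.card G / Fintype.card {b : G // ConjClasses.mk b = c}) := by
                  rw [Finset.sum_const, Finset.card_univ, smul_eq_mul]
            _ = Fintype.card G := Nat.mul_div_cancel' hdvd
          · rw [if_neg hc]
            refine Finset.sum_eq_zero fun γ _ => ?_
            haveI := S_isEmpty φ γ.1 (by rw [γ.2]; exact hc)
            exact Fintype.card_eq_zero
    _ = Fintype.card {c : ConjClasses G // ConjClasses.map φ c = c} * Fintype.card G := by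
          rw [← Finset.sum_filter, Finset.sum_const, smul_eq_mul, Fintype.card_subtype]
  have hΩ : Fintype.card (MulAction.orbitRel.Quotient G (Twisted G φ)) =
      Fintype.card {c : ConjClasses G // ConjClasses.map φ c = c} :=
    Nat.eq_of_mul_eq_mul_right Fintype.card_pos (by rw [← hb, hsum])
  rw [Nat.card_congr (reidEquiv φ), Nat.card_eq_fintype_card, hΩ]

end Orbits

section Trace

variable {G : Type*} [Group G] (φ : G →* G)

/-- Class functions are equivalent to functions on conjugacy classes. -/
noncomputable def classFunEquiv (G : Type*) [Group G] :
    classFunctions G ≃ₗ[ℂ] (ConjClasses G → ℂ) where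
  toFun f c := Quotient.liftOn' c f.1 (fun a b hab => by
    obtain ⟨g, hg⟩ := isConj_iff.mp hab
    rw [← hg]
    exact (f.2 a g).symm)
  map_add' f g := by
    funext c
    induction c using Quotient.inductionOn'
    rfl
  map_smul' r f := by
    funext c
    induction c using Quotient.inductionOn'
    rfl
  invFun h := ⟨fun g => h (ConjClasses.mk g), by
    intro x y
    have : ConjClasses.mk (y * x * y⁻¹) = ConjClasses.mk x :=
      ConjClasses.mk_eq_mk_iff_isConj.mpr (isConj_iff.mpr ⟨y⁻¹, by group⟩)
    show h (ConjClasses.mk (y * x * y⁻¹)) = h (ConjClasses.mk x)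
    rw [this]⟩
  left_inv f := by
    ext g
    rfl
  right_inv h := by
    funext c
    induction c using Quotient.inductionOn'
    rfl

lemma conj_pullback :
    (classFunEquiv G).conj (pullbackClassFun φ) =
      LinearMap.funLeft ℂ ℂ (ConjClasses.map φ) := by
  refine LinearMap.ext fun h => ?_
  funext c
  induction c using Quotient.inductionOn'
  rfl

lemma trace_funLeft {n : Type*} [Fintype n] [DecidableEq n] (f : n → n) :
    LinearMap.trace ℂ (n → ℂ) (LinearMap.funLeft ℂ ℂ f) =
      (Fintype.card {c : n // f c = c} : ℂ) := by
  rw [LinearMap.trace_eq_matrix_trace ℂ (Pi.basisFun ℂ n), Matrix.trace]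
  rw [Fintype.card_subtype, Finset.card_filter]
  push_cast
  refine Finset.sum_congr rfl fun i _ => ?_
  rw [Matrix.diag]
  rw [LinearMap.toMatrix_apply]
  simp [LinearMap.funLeft_apply, Pi.single_apply, eq_comm]

end Trace

/-- trace formula. For an endomorphism `φ` of a finite group `G` and the
linear map `B(f) = f ∘ φ` on the space of complex class functions, `R(φ) = Tr B`. -/
theorem reidemeister_number_eq_trace_pullback {G : Type*} [Group G] [Fintype G]
    (φ : G →* G) :
    (Nat.card (ReidemeisterSet φ) : ℂ) =
      LinearMap.trace ℂ (classFunctions G) (pullbackClassFun φ) := by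
  classical
  rw [reid_card φ, ← LinearMap.trace_conj' (pullbackClassFun φ) (classFunEquiv G),
    conj_pullback, trace_funLeft]
end

section
/- Let G be a finite group and φ : G → G an endomorphism. Then R(φ) equals the number of equivalence classes of irreducible finite-dimensional complex representations ρ of G such that ρ∘φ is equivalent to ρ (i.e. there is a linear isomorphism of the representation spaces intertwining ρ∘φ and ρ). -/
/-- A finite-dimensional complex representation (on `ℂⁿ`) is irreducible if the space is
nonzero and has no nonzero proper invariant subspace. -/
def IsIrreducibleRep {G : Type*} [Group G] {n : ℕ}
    (ρ : Representation ℂ G (Fin n → ℂ)) : Prop :=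
  0 < n ∧ ∀ p : Submodule ℂ (Fin n → ℂ),
    (∀ g : G, ∀ v ∈ p, ρ g v ∈ p) → p = ⊥ ∨ p = ⊤

/-- The type of irreducible finite-dimensional complex representations `ρ` of `G` such that
`ρ ∘ φ` is equivalent to `ρ`, i.e. some linear isomorphism intertwines `ρ ∘ φ` and `ρ`. -/
def FixedIrredRep (G : Type*) [Group G] (φ : G →* G) : Type _ :=
  Σ n : ℕ, { ρ : Representation ℂ G (Fin n → ℂ) // IsIrreducibleRep ρ ∧
    ∃ M : (Fin n → ℂ) ≃ₗ[ℂ] (Fin n → ℂ),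
      ∀ g : G, M.toLinearMap ∘ₗ ρ (φ g) = ρ g ∘ₗ M.toLinearMap }

/-- Equivalence of representations: a linear isomorphism of the representation spaces
commuting with the actions. -/
def RepEquiv {G : Type*} [Group G] {φ : G →* G} (ρ σ : FixedIrredRep G φ) : Prop :=
  ∃ e : (Fin ρ.1 → ℂ) ≃ₗ[ℂ] (Fin σ.1 → ℂ),
    ∀ g : G, e.toLinearMap ∘ₗ ρ.2.1 g = σ.2.1 g ∘ₗ e.toLinearMap


noncomputable section TB

open LinearMap Finset Module

variable {G : Type*} [Group G]

/-- invariant submodule -/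
def IsInvt {V : Type*} [AddCommGroup V] [Module ℂ V]
    (ρ : Representation ℂ G V) (p : Submodule ℂ V) : Prop :=
  ∀ g : G, ∀ v ∈ p, ρ g v ∈ p

/-- the key "Fourier coefficient" operator -/
def Pop [Fintype G] (f : G → ℂ) {V : Type*} [AddCommGroup V] [Module ℂ V]
    (ρ : Representation ℂ G V) : Module.End ℂ V :=
  ∑ α : G, f α • (ρ α⁻¹)

/-- twisted class function -/
def IsTCF (φ : G →* G) (f : G → ℂ) : Prop :=
  ∀ γ α : G, f (γ * α * (φ γ)⁻¹) = f α

lemma trace_pi {n : ℕ} (f : (Fin n → ℂ) →ₗ[ℂ] (Fin n → ℂ)) :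
    trace ℂ _ f = ∑ i, f (Pi.single i 1) i := by
  rw [trace_eq_matrix_trace ℂ (Pi.basisFun ℂ (Fin n))]
  simp [Matrix.trace, Matrix.diag, LinearMap.toMatrix_apply]

/-- averaging operator intertwines -/
lemma avg_intertwine [Fintype G] {V W : Type*} [AddCommGroup V] [Module ℂ V]
    [AddCommGroup W] [Module ℂ W] (ρ : Representation ℂ G V) (σ : Representation ℂ G W)
    (B : V →ₗ[ℂ] W) (h : G) :
    (σ h) ∘ₗ (∑ γ : G, (σ γ) ∘ₗ B ∘ₗ (ρ γ⁻¹)) = (∑ γ : G, (σ γ) ∘ₗ B ∘ₗ (ρ γ⁻¹)) ∘ₗ (ρ h) := by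
  ext v
  simp only [LinearMap.comp_apply, LinearMap.coe_sum, Finset.sum_apply, map_sum]
  refine Fintype.sum_bijective (fun γ => h * γ) (Group.mulLeft_bijective h) _ _ fun γ => ?_
  have e1 : (ρ ((h*γ)⁻¹)) ((ρ h) v) = ρ γ⁻¹ v := by
    rw [← Module.End.mul_apply, ← map_mul]; congr 1; group
  have e2 : ∀ x, (σ h) ((σ γ) x) = σ (h*γ) x := fun x => by
    rw [map_mul]; rfl
  rw [e1, e2]

lemma IsIrreducibleRep.invt {n : ℕ} {ρ : Representation ℂ G (Fin n → ℂ)}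
    (hρ : IsIrreducibleRep ρ) {p : Submodule ℂ (Fin n → ℂ)}
    (hp : ∀ g : G, ∀ v ∈ p, ρ g v ∈ p) : p = ⊥ ∨ p = ⊤ := hρ.2 p hp

/-- Schur's lemma, zero form. -/
lemma schur_zero {n m : ℕ} {ρ : Representation ℂ G (Fin n → ℂ)}
    {σ : Representation ℂ G (Fin m → ℂ)}
    (hρ : IsIrreducibleRep ρ) (hσ : IsIrreducibleRep σ)
    (hne : ¬ ∃ e : (Fin n → ℂ) ≃ₗ[ℂ] (Fin m → ℂ),
      ∀ h : G, e.toLinearMap ∘ₗ ρ h = σ h ∘ₗ e.toLinearMap)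
    (T : (Fin n → ℂ) →ₗ[ℂ] (Fin m → ℂ)) (hT : ∀ h : G, σ h ∘ₗ T = T ∘ₗ ρ h) : T = 0 := by
  have hker : ker T = ⊥ ∨ ker T = ⊤ := by
    refine hρ.invt fun g v hv => ?_
    have := congrArg (fun (f : _ →ₗ[ℂ] _) => f v) (hT g)
    simp only [LinearMap.comp_apply] at this
    simp only [LinearMap.mem_ker] at hv ⊢
    rw [← this, hv, map_zero]
  have hrange : range T = ⊥ ∨ range T = ⊤ := by
    refine hσ.invt fun g v hv => ?_
    obtain ⟨u, rfl⟩ := hv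
    have := congrArg (fun (f : _ →ₗ[ℂ] _) => f u) (hT g)
    simp only [LinearMap.comp_apply] at this
    exact ⟨ρ g u, this.symm⟩
  rcases hker with hk | hk
  · rcases hrange with hr | hr
    · exact LinearMap.range_eq_bot.1 hr
    · exfalso
      apply hne
      refine ⟨LinearEquiv.ofBijective T ⟨LinearMap.ker_eq_bot.1 hk,
        LinearMap.range_eq_top.1 hr⟩, fun h => ?_⟩
      exact (hT h).symm
  · exact LinearMap.ker_eq_top.1 hk

/-- Schur's lemma, scalar form. -/
lemma schur_scalar {n : ℕ} {ρ : Representation ℂ G (Fin n → ℂ)}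
    (hρ : IsIrreducibleRep ρ) (T : Module.End ℂ (Fin n → ℂ))
    (hT : ∀ h : G, ρ h ∘ₗ T = T ∘ₗ ρ h) :
    T = ((trace ℂ _ T) / (n : ℂ)) • (1 : Module.End ℂ (Fin n → ℂ)) := by
  haveI : Nonempty (Fin n) := ⟨⟨0, hρ.1⟩⟩
  haveI : Nontrivial (Fin n → ℂ) := inferInstance
  obtain ⟨c, hc⟩ := Module.End.exists_eigenvalue T
  have hker : ker (T - c • 1) ≠ ⊥ := by
    rw [← Module.End.eigenspace_def]; exact hc
  have hinv : ker (T - c • 1) = ⊥ ∨ ker (T - c • 1) = ⊤ := by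
    refine hρ.invt fun g v hv => ?_
    simp only [LinearMap.mem_ker, LinearMap.sub_apply, LinearMap.smul_apply,
      Module.End.one_apply, sub_eq_zero] at hv ⊢
    have := congrArg (fun (f : _ →ₗ[ℂ] _) => f v) (hT g)
    simp only [LinearMap.comp_apply] at this
    rw [← this, hv, map_smul]
  have hTc : T = c • 1 := by
    rcases hinv with h | h
    · exact absurd h hker
    · have := LinearMap.ker_eq_top.1 h
      rw [sub_eq_zero] at this
      exact this
  have htr : trace ℂ _ T = c * n := by
    rw [hTc, map_smul, trace_one, Module.finrank_pi, Fintype.card_fin]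
    simp [mul_comm]
  have hn : (n : ℂ) ≠ 0 := Nat.cast_ne_zero.2 hρ.1.ne'
  rw [htr, mul_div_assoc, div_self hn, mul_one, hTc]

lemma avg_scalar [Fintype G] {n : ℕ} {ρ : Representation ℂ G (Fin n → ℂ)}
    (hρ : IsIrreducibleRep ρ) (B : Module.End ℂ (Fin n → ℂ)) :
    ∑ γ : G, (ρ γ) ∘ₗ B ∘ₗ (ρ γ⁻¹)
      = ((Fintype.card G : ℂ) * trace ℂ _ B / (n : ℂ)) • 1 := by
  have h := schur_scalar hρ (∑ γ : G, (ρ γ) ∘ₗ B ∘ₗ (ρ γ⁻¹))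
    (fun h => by
      have := avg_intertwine ρ ρ B h
      simpa using this)
  have htr : trace ℂ _ (∑ γ : G, (ρ γ) ∘ₗ B ∘ₗ (ρ γ⁻¹))
      = (Fintype.card G : ℂ) * trace ℂ _ B := by
    rw [map_sum]
    have : ∀ γ : G, trace ℂ _ ((ρ γ) ∘ₗ B ∘ₗ (ρ γ⁻¹)) = trace ℂ _ B := by
      intro γ
      have : (ρ γ) ∘ₗ B ∘ₗ (ρ γ⁻¹) = (ρ γ) * (B * (ρ γ⁻¹)) := rfl
      rw [this, trace_mul_comm]
      have : B * ρ γ⁻¹ * ρ γ = B * (ρ γ⁻¹ * ρ γ) := by rw [mul_assoc]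
      rw [this, ← map_mul, inv_mul_cancel, map_one, mul_one]
    rw [Finset.sum_congr rfl (fun γ _ => this γ), Finset.sum_const, Finset.card_univ,
      nsmul_eq_mul]
  rw [h, htr]

/-- rank-one map `x ↦ x j • w` -/
def rankOne {n m : ℕ} (j : Fin n) (w : Fin m → ℂ) : (Fin n → ℂ) →ₗ[ℂ] (Fin m → ℂ) where
  toFun x := x j • w
  map_add' x y := by simp [add_smul]
  map_smul' c x := by simp [smul_smul]

@[simp] lemma rankOne_apply {n m : ℕ} (j : Fin n) (w : Fin m → ℂ) (x : Fin n → ℂ) :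
    rankOne j w x = x j • w := rfl

lemma trace_rankOne {n : ℕ} (j : Fin n) (w : Fin n → ℂ) :
    trace ℂ _ (rankOne j w) = w j := by
  rw [trace_pi]
  rw [Finset.sum_eq_single j]
  · simp
  · intro i _ hij
    simp [Pi.single_apply, hij]
  · simp

/-- Cross orthogonality: `∑ α, tr (σ α ∘ C) • ρ α⁻¹ = 0` for non-equivalent irreducibles. -/
lemma orth_cross [Fintype G] {n m : ℕ} {ρ : Representation ℂ G (Fin n → ℂ)}
    {σ : Representation ℂ G (Fin m → ℂ)}
    (hρ : IsIrreducibleRep ρ) (hσ : IsIrreducibleRep σ)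
    (hne : ¬ ∃ e : (Fin n → ℂ) ≃ₗ[ℂ] (Fin m → ℂ),
      ∀ h : G, e.toLinearMap ∘ₗ ρ h = σ h ∘ₗ e.toLinearMap)
    (C : Module.End ℂ (Fin m → ℂ)) :
    ∑ α : G, (trace ℂ _ ((σ α) ∘ₗ C)) • (ρ α⁻¹) = 0 := by
  refine LinearMap.ext fun v => funext fun j => ?_
  simp only [LinearMap.coe_sum, Finset.sum_apply, LinearMap.smul_apply,
    LinearMap.zero_apply, Pi.zero_apply, Pi.smul_apply, smul_eq_mul]
  have key : ∀ i : Fin m,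
      ∑ α : G, ((σ α) (C (Pi.single i 1))) i * ((ρ α⁻¹) v) j = 0 := by
    intro i
    have hz := schur_zero hρ hσ hne (∑ γ : G, (σ γ) ∘ₗ (rankOne j (C (Pi.single i 1))) ∘ₗ (ρ γ⁻¹))
      (fun h => avg_intertwine ρ σ _ h)
    have := congrArg (fun (f : _ →ₗ[ℂ] _) => (f v) i) hz
    simp only [LinearMap.coe_sum, Finset.sum_apply, LinearMap.comp_apply, rankOne_apply,
      map_smul, LinearMap.zero_apply, Pi.zero_apply, Pi.smul_apply, smul_eq_mul] at this
    rw [← this]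
    exact Finset.sum_congr rfl fun α _ => mul_comm _ _
  calc ∑ α : G, trace ℂ _ ((σ α) ∘ₗ C) * ((ρ α⁻¹) v) j
      = ∑ α : G, ∑ i : Fin m, ((σ α) (C (Pi.single i 1))) i * ((ρ α⁻¹) v) j := by
        refine Finset.sum_congr rfl fun α _ => ?_
        rw [trace_pi, Finset.sum_mul]
        rfl
    _ = ∑ i : Fin m, ∑ α : G, ((σ α) (C (Pi.single i 1))) i * ((ρ α⁻¹) v) j :=
        Finset.sum_comm
    _ = 0 := by simp [key]

lemma pi_expand {n : ℕ} (v : Fin n → ℂ) : v = ∑ i, v i • (Pi.single i 1 : Fin n → ℂ) := by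
  ext k
  simp [Pi.single_apply, Finset.sum_apply, mul_ite]

/-- Self orthogonality: `∑ α, tr (ρ α ∘ A) • ρ α⁻¹ = (|G|/n) • A` for irreducible `ρ`. -/
lemma orth_self [Fintype G] {n : ℕ} {ρ : Representation ℂ G (Fin n → ℂ)}
    (hρ : IsIrreducibleRep ρ) (A : Module.End ℂ (Fin n → ℂ)) :
    ∑ α : G, (trace ℂ _ ((ρ α) ∘ₗ A)) • (ρ α⁻¹)
      = ((Fintype.card G : ℂ) / (n : ℂ)) • A := by
  refine LinearMap.ext fun v => funext fun j => ?_
  simp only [LinearMap.coe_sum, Finset.sum_apply, LinearMap.smul_apply,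
    Pi.smul_apply, smul_eq_mul]
  have key : ∀ i : Fin n,
      ∑ α : G, ((ρ α) (A (Pi.single i 1))) i * ((ρ α⁻¹) v) j
        = (Fintype.card G : ℂ) / n * ((A (Pi.single i 1)) j * v i) := by
    intro i
    have hz := avg_scalar hρ (rankOne j (A (Pi.single i 1)))
    have := congrArg (fun (f : _ →ₗ[ℂ] _) => (f v) i) hz
    simp only [LinearMap.coe_sum, Finset.sum_apply, LinearMap.comp_apply, rankOne_apply,
      map_smul, LinearMap.smul_apply, Module.End.one_apply, Pi.smul_apply, smul_eq_mul,
      trace_rankOne] at this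
    rw [show ∑ α : G, ((ρ α) (A (Pi.single i 1))) i * ((ρ α⁻¹) v) j
        = ∑ α : G, ((ρ α⁻¹) v) j * ((ρ α) (A (Pi.single i 1))) i from
      Finset.sum_congr rfl fun α _ => mul_comm _ _, this]
    ring
  calc ∑ α : G, trace ℂ _ ((ρ α) ∘ₗ A) * ((ρ α⁻¹) v) j
      = ∑ i : Fin n, ∑ α : G, ((ρ α) (A (Pi.single i 1))) i * ((ρ α⁻¹) v) j := by
        rw [Finset.sum_comm]
        refine Finset.sum_congr rfl fun α _ => ?_
        rw [trace_pi, Finset.sum_mul]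
        rfl
    _ = (Fintype.card G : ℂ) / n * ∑ i : Fin n, (A (Pi.single i 1)) j * v i := by
        rw [Finset.mul_sum]
        exact Finset.sum_congr rfl fun i _ => key i
    _ = (((Fintype.card G : ℂ) / n) • A) v j := by
        simp only [LinearMap.smul_apply, Pi.smul_apply, smul_eq_mul]
        congr 1
        conv_rhs => rw [pi_expand v]
        rw [map_sum]
        simp only [map_smul, Finset.sum_apply, Pi.smul_apply, smul_eq_mul]
        exact Finset.sum_congr rfl fun i _ => mul_comm _ _

variable {φ : G →* G}

lemma Pop_sub [Fintype G] {V : Type*} [AddCommGroup V] [Module ℂ V]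
    (ρ : Representation ℂ G V) (f₁ f₂ : G → ℂ) :
    Pop (f₁ - f₂) ρ = Pop f₁ ρ - Pop f₂ ρ := by
  simp [Pop, sub_smul, Finset.sum_sub_distrib]

lemma Pop_smul [Fintype G] {V : Type*} [AddCommGroup V] [Module ℂ V]
    (ρ : Representation ℂ G V) (c : ℂ) (f : G → ℂ) :
    Pop (c • f) ρ = c • Pop f ρ := by
  simp [Pop, smul_smul, Finset.smul_sum]

lemma Pop_sum [Fintype G] {V : Type*} [AddCommGroup V] [Module ℂ V]
    (ρ : Representation ℂ G V) {ι : Type*} (s : Finset ι) (h : ι → G → ℂ) :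
    Pop (∑ q ∈ s, h q) ρ = ∑ q ∈ s, Pop (h q) ρ := by
  unfold Pop
  rw [Finset.sum_comm]
  refine Finset.sum_congr rfl fun α _ => ?_
  rw [Finset.sum_apply, Finset.sum_smul]

/-- the twisted character of a fixed irreducible rep -/
def fchar {n : ℕ} (ρ : Representation ℂ G (Fin n → ℂ))
    (M : (Fin n → ℂ) ≃ₗ[ℂ] (Fin n → ℂ)) : G → ℂ :=
  fun α => trace ℂ _ ((ρ α) ∘ₗ M.symm.toLinearMap)

lemma symm_intertwine {n : ℕ} {ρ : Representation ℂ G (Fin n → ℂ)}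
    {M : (Fin n → ℂ) ≃ₗ[ℂ] (Fin n → ℂ)}
    (hM : ∀ g : G, M.toLinearMap ∘ₗ ρ (φ g) = ρ g ∘ₗ M.toLinearMap) (γ : G) (v : Fin n → ℂ) :
    ρ ((φ γ)⁻¹) (M.symm v) = M.symm (ρ γ⁻¹ v) := by
  apply M.injective
  have h := congrArg (fun (f : _ →ₗ[ℂ] _) => f (M.symm v)) (hM γ⁻¹)
  simp only [LinearMap.comp_apply, LinearEquiv.coe_coe] at h
  rw [map_inv φ] at h
  rw [M.apply_symm_apply] at h
  rw [M.apply_symm_apply]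
  exact h

lemma fchar_isTCF {n : ℕ} {ρ : Representation ℂ G (Fin n → ℂ)}
    {M : (Fin n → ℂ) ≃ₗ[ℂ] (Fin n → ℂ)}
    (hM : ∀ g : G, M.toLinearMap ∘ₗ ρ (φ g) = ρ g ∘ₗ M.toLinearMap) :
    IsTCF φ (fchar ρ M) := by
  intro γ α
  unfold fchar
  have h1 : (ρ (γ * α * (φ γ)⁻¹)) ∘ₗ M.symm.toLinearMap
      = (ρ γ) * ((ρ α) ∘ₗ M.symm.toLinearMap ∘ₗ (ρ γ⁻¹)) := by
    refine LinearMap.ext fun v => ?_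
    simp only [Module.End.mul_apply, LinearMap.comp_apply, LinearEquiv.coe_toLinearMap]
    rw [show γ * α * (φ γ)⁻¹ = γ * (α * (φ γ)⁻¹) by group, map_mul, map_mul]
    simp only [Module.End.mul_apply]
    congr 1
    congr 1
    exact symm_intertwine hM γ v
  rw [h1, trace_mul_comm]
  have h2 : (ρ α) ∘ₗ M.symm.toLinearMap ∘ₗ (ρ γ⁻¹) * (ρ γ)
      = (ρ α) ∘ₗ M.symm.toLinearMap := by
    refine LinearMap.ext fun v => ?_
    simp only [Module.End.mul_apply, LinearMap.comp_apply, LinearEquiv.coe_toLinearMap]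
    congr 1
    rw [← Module.End.mul_apply, ← map_mul, inv_mul_cancel, map_one, Module.End.one_apply]
  rw [h2]

/-- `Pop f ρ` intertwines `ρ` with `ρ ∘ φ` when `f` is a twisted class function. -/
lemma Pop_intertwine [Fintype G] {f : G → ℂ} (hf : IsTCF φ f) {n : ℕ}
    (ρ : Representation ℂ G (Fin n → ℂ)) (h : G) :
    ρ (φ h) ∘ₗ Pop f ρ = Pop f ρ ∘ₗ ρ h := by
  refine LinearMap.ext fun v => ?_
  simp only [LinearMap.comp_apply, Pop, LinearMap.coe_sum, Finset.sum_apply,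
    LinearMap.smul_apply, map_sum, map_smul]
  refine Fintype.sum_bijective (fun β => h * β * (φ h)⁻¹)
    ((Equiv.mulLeft h).trans (Equiv.mulRight (φ h)⁻¹)).bijective _ _ fun β => ?_
  rw [hf h β]
  congr 1
  rw [← Module.End.mul_apply, ← map_mul, ← Module.End.mul_apply, ← map_mul]
  congr 2
  group

/-- If `ρ` is irreducible and not `φ`-fixed, `Pop f ρ = 0` for twisted class functions `f`. -/
lemma Pop_eq_zero_of_not_fixed [Fintype G] {f : G → ℂ} (hf : IsTCF φ f) {n : ℕ}
    {ρ : Representation ℂ G (Fin n → ℂ)} (hρ : IsIrreducibleRep ρ)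
    (hne : ¬ ∃ M : (Fin n → ℂ) ≃ₗ[ℂ] (Fin n → ℂ),
      ∀ g : G, M.toLinearMap ∘ₗ ρ (φ g) = ρ g ∘ₗ M.toLinearMap) :
    Pop f ρ = 0 := by
  set P := Pop f ρ with hP
  have hint : ∀ h : G, ∀ v, P (ρ h v) = ρ (φ h) (P v) := by
    intro h v
    have := congrArg (fun (t : _ →ₗ[ℂ] _) => t v) (Pop_intertwine hf ρ h)
    simpa using this.symm
  have hker : ker P = ⊥ ∨ ker P = ⊤ := by
    refine hρ.invt fun g v hv => ?_
    simp only [LinearMap.mem_ker] at hv ⊢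
    rw [hint g v, hv, map_zero]
  rcases hker with h | h
  · exfalso
    apply hne
    have hbij : Function.Bijective P := by
      have hinj := LinearMap.ker_eq_bot.1 h
      exact ⟨hinj, (LinearMap.injective_iff_surjective).1 hinj⟩
    refine ⟨(LinearEquiv.ofBijective P hbij).symm, fun g => ?_⟩
    refine LinearMap.ext fun w => ?_
    simp only [LinearMap.comp_apply, LinearEquiv.coe_toLinearMap]
    set e := LinearEquiv.ofBijective P hbij
    have hew : ∀ x, e.symm (P x) = x := fun x => e.symm_apply_apply x
    have : ρ (φ g) w = P (ρ g (e.symm w)) := by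
      rw [hint g (e.symm w)]
      congr 1
      exact (e.apply_symm_apply w).symm
    rw [this, hew]
  · exact LinearMap.ker_eq_top.1 h

/-- If `ρ` is `φ`-fixed via `M`, then `Pop f ρ` is a scalar multiple of `M.symm`. -/
lemma Pop_eq_smul_of_fixed [Fintype G] {f : G → ℂ} (hf : IsTCF φ f) {n : ℕ}
    {ρ : Representation ℂ G (Fin n → ℂ)} (hρ : IsIrreducibleRep ρ)
    {M : (Fin n → ℂ) ≃ₗ[ℂ] (Fin n → ℂ)}
    (hM : ∀ g : G, M.toLinearMap ∘ₗ ρ (φ g) = ρ g ∘ₗ M.toLinearMap) :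
    ∃ c : ℂ, Pop f ρ = c • M.symm.toLinearMap := by
  set P := Pop f ρ with hP
  have hcomm : ∀ h : G, ρ h ∘ₗ (M.toLinearMap ∘ₗ P) = (M.toLinearMap ∘ₗ P) ∘ₗ ρ h := by
    intro h
    calc ρ h ∘ₗ (M.toLinearMap ∘ₗ P) = (ρ h ∘ₗ M.toLinearMap) ∘ₗ P := by
          rw [LinearMap.comp_assoc]
      _ = (M.toLinearMap ∘ₗ ρ (φ h)) ∘ₗ P := by rw [hM h]
      _ = M.toLinearMap ∘ₗ (ρ (φ h) ∘ₗ P) := by rw [LinearMap.comp_assoc]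
      _ = M.toLinearMap ∘ₗ (P ∘ₗ ρ h) := by rw [Pop_intertwine hf ρ h]
      _ = (M.toLinearMap ∘ₗ P) ∘ₗ ρ h := by rw [LinearMap.comp_assoc]
  have hsc := schur_scalar hρ (M.toLinearMap ∘ₗ P) hcomm
  refine ⟨trace ℂ _ (M.toLinearMap ∘ₗ P) / n, ?_⟩
  refine LinearMap.ext fun v => ?_
  have := congrArg (fun (t : _ →ₗ[ℂ] _) => M.symm (t v)) hsc
  simp only [LinearMap.comp_apply, LinearMap.smul_apply, Module.End.one_apply,
    LinearEquiv.coe_toLinearMap, map_smul] at this ⊢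
  rw [M.symm_apply_apply] at this
  exact this

/-- restriction of a representation to an invariant submodule -/
def resRep {V : Type*} [AddCommGroup V] [Module ℂ V] (ρ : Representation ℂ G V)
    (p : Submodule ℂ V) (hp : IsInvt ρ p) : Representation ℂ G p where
  toFun γ := (ρ γ).restrict (fun v hv => hp γ v hv)
  map_one' := by
    refine LinearMap.ext fun v => Subtype.ext ?_
    simp [LinearMap.restrict_apply]
  map_mul' γ δ := by
    refine LinearMap.ext fun v => Subtype.ext ?_
    simp [LinearMap.restrict_apply]

lemma Pop_res [Fintype G] (f : G → ℂ) {V : Type*} [AddCommGroup V] [Module ℂ V]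
    (ρ : Representation ℂ G V) (p : Submodule ℂ V) (hp : IsInvt ρ p) (x : p) :
    (Pop f (resRep ρ p hp) x : V) = Pop f ρ (x : V) := by
  unfold Pop
  simp only [LinearMap.coe_sum, Finset.sum_apply, LinearMap.smul_apply]
  rw [Submodule.coe_sum]
  refine Finset.sum_congr rfl fun α _ => ?_
  rw [Submodule.coe_smul]
  rfl

/-- Maschke: invariant submodules have invariant complements. -/
lemma maschke [Fintype G] {V : Type*} [AddCommGroup V] [Module ℂ V]
    (ρ : Representation ℂ G V) {p : Submodule ℂ V} (hp : IsInvt ρ p) :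
    ∃ q : Submodule ℂ V, IsInvt ρ q ∧ IsCompl p q := by
  obtain ⟨q₀, hq₀⟩ := p.exists_isCompl
  set π₀ : V →ₗ[ℂ] V := p.subtype ∘ₗ (p.projectionOnto q₀ hq₀) with hπ₀
  have hπ₀mem : ∀ v : V, π₀ v ∈ p := fun v => (p.projectionOnto q₀ hq₀ v).2
  have hπ₀id : ∀ v ∈ p, π₀ v = v := by
    intro v hv
    simp only [hπ₀, LinearMap.comp_apply, Submodule.coe_subtype]
    rw [show v = ((⟨v, hv⟩ : p) : V) from rfl, Submodule.projectionOnto_apply_left]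
  have hcard : (Fintype.card G : ℂ) ≠ 0 := Nat.cast_ne_zero.2 Fintype.card_ne_zero
  set T : V →ₗ[ℂ] V := ∑ γ : G, (ρ γ) ∘ₗ π₀ ∘ₗ (ρ γ⁻¹) with hT
  set π : V →ₗ[ℂ] V := (Fintype.card G : ℂ)⁻¹ • T with hπdef
  have hπmem : ∀ v : V, π v ∈ p := by
    intro v
    apply Submodule.smul_mem
    rw [hT]
    simp only [LinearMap.coe_sum, Finset.sum_apply, LinearMap.comp_apply]
    exact Submodule.sum_mem _ fun γ _ => hp γ _ (hπ₀mem _)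
  have hπid : ∀ v ∈ p, π v = v := by
    intro v hv
    have hTv : T v = (Fintype.card G : ℕ) • v := by
      rw [hT]
      simp only [LinearMap.coe_sum, Finset.sum_apply, LinearMap.comp_apply]
      rw [Finset.sum_congr rfl (fun γ _ => ?_), Finset.sum_const, Finset.card_univ]
      rw [hπ₀id _ (hp γ⁻¹ v hv), ← Module.End.mul_apply, ← map_mul, mul_inv_cancel, map_one,
        Module.End.one_apply]
    rw [hπdef]
    simp only [LinearMap.smul_apply, hTv]
    rw [← Nat.cast_smul_eq_nsmul ℂ, smul_smul, inv_mul_cancel₀ hcard, one_smul]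
  have hπcomm : ∀ h : G, ∀ v, π (ρ h v) = ρ h (π v) := by
    intro h v
    have := congrArg (fun (t : _ →ₗ[ℂ] _) => t v) (avg_intertwine ρ ρ π₀ h)
    simp only [LinearMap.comp_apply] at this
    rw [hπdef]
    simp only [LinearMap.smul_apply, ← hT]
    rw [← this, map_smul]
  have hππ : ∀ v, π (π v) = π v := fun v => hπid _ (hπmem v)
  refine ⟨ker π, fun g v hv => ?_, ?_, ?_⟩
  · simp only [LinearMap.mem_ker] at hv ⊢
    rw [hπcomm g v, hv, map_zero]
  · rw [disjoint_iff]
    rw [Submodule.eq_bot_iff]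
    rintro v hv
    rw [Submodule.mem_inf] at hv
    have := hπid v hv.1
    rw [LinearMap.mem_ker.1 hv.2] at this
    exact this.symm
  · rw [codisjoint_iff, Submodule.eq_top_iff']
    intro v
    have : v = π v + (v - π v) := by abel
    rw [this]
    refine Submodule.add_mem_sup (hπmem v) ?_
    rw [LinearMap.mem_ker, map_sub, hππ, sub_self]

/-- If `Pop f` kills all irreducibles, it kills all finite-dimensional reps. -/
lemma Pop_all_reps [Fintype G] {f : G → ℂ}
    (h0 : ∀ (n : ℕ) (ρ : Representation ℂ G (Fin n → ℂ)), IsIrreducibleRep ρ → Pop f ρ = 0) :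
    ∀ (k : ℕ) {V : Type*} [AddCommGroup V] [Module ℂ V] [FiniteDimensional ℂ V]
      (ρ : Representation ℂ G V), Module.finrank ℂ V ≤ k → Pop f ρ = 0 := by
  intro k
  induction k with
  | zero =>
    intro V _ _ _ ρ hk
    haveI : Subsingleton V := Module.finrank_zero_iff.1 (Nat.le_zero.1 hk)
    exact Subsingleton.elim _ _
  | succ k IH =>
    intro V _ _ _ ρ hk
    by_cases hle : Module.finrank ℂ V ≤ k
    · exact IH ρ hle
    have hrk : Module.finrank ℂ V = k + 1 := le_antisymm hk (not_le.1 hle)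
    by_cases hred : ∃ p : Submodule ℂ V, IsInvt ρ p ∧ p ≠ ⊥ ∧ p ≠ ⊤
    · obtain ⟨p, hpI, hpb, hpt⟩ := hred
      obtain ⟨q, hqI, hpq⟩ := maschke ρ hpI
      have hqt : q ≠ ⊤ := by
        rintro rfl
        exact hpb (disjoint_top.1 hpq.1)
      have hfp : Module.finrank ℂ p ≤ k := by
        have := Submodule.finrank_lt (K := ℂ) (V := V) hpt
        omega
      have hfq : Module.finrank ℂ q ≤ k := by
        have := Submodule.finrank_lt (K := ℂ) (V := V) hqt
        omega
      have h1 := IH (resRep ρ p hpI) hfp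
      have h2 := IH (resRep ρ q hqI) hfq
      refine LinearMap.ext fun v => ?_
      have hv : v ∈ p ⊔ q := by
        rw [hpq.codisjoint.eq_top]; exact Submodule.mem_top
      obtain ⟨a, ha, b, hb, rfl⟩ := Submodule.mem_sup.1 hv
      have ea : Pop f ρ a = 0 := by
        have := congrArg (fun (t : _ →ₗ[ℂ] _) => ((t ⟨a, ha⟩ : p) : V)) h1
        simpa [Pop_res] using this
      have eb : Pop f ρ b = 0 := by
        have := congrArg (fun (t : _ →ₗ[ℂ] _) => ((t ⟨b, hb⟩ : q) : V)) h2
        simpa [Pop_res] using this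
      rw [map_add, ea, eb, add_zero, LinearMap.zero_apply]
    · push_neg at hred
      haveI : Nontrivial V := by
        rcases subsingleton_or_nontrivial V with hs | hs
        · rw [Module.finrank_zero_iff.2 hs] at hrk
          omega
        · exact hs
      set n := Module.finrank ℂ V with hn
      set e : V ≃ₗ[ℂ] (Fin n → ℂ) := (Module.finBasis ℂ V).equivFun with he
      set ρ' : Representation ℂ G (Fin n → ℂ) :=
        { toFun := fun γ => e.conj (ρ γ),
          map_one' := by
            show e.conj (ρ 1) = 1
            rw [map_one, show (1 : Module.End ℂ V) = LinearMap.id from rfl,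
              LinearEquiv.conj_id]
            rfl
          map_mul' := fun γ δ => by
            show e.conj (ρ (γ * δ)) = e.conj (ρ γ) * e.conj (ρ δ)
            rw [map_mul, show ρ γ * ρ δ = (ρ γ) ∘ₗ (ρ δ) from rfl, LinearEquiv.conj_comp]
            rfl } with hρ''
      have hconj : ∀ γ : G, ρ' γ = e.conj (ρ γ) := fun γ => rfl
      have hρ'ir : IsIrreducibleRep ρ' := by
        refine ⟨by omega, fun p' hp' => ?_⟩
        set p : Submodule ℂ V := p'.map e.symm.toLinearMap with hp
        have hpI : IsInvt ρ p := by
          rintro g v hv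
          obtain ⟨w, hw, rfl⟩ := hv
          refine ⟨ρ' g w, hp' g w hw, ?_⟩
          rw [hconj g, LinearEquiv.conj_apply]
          simp only [LinearMap.comp_apply, LinearEquiv.coe_toLinearMap,
            LinearEquiv.coe_coe]
          rw [e.symm_apply_apply]
        have hmapback : p' = p.map e.toLinearMap := by
          rw [hp, ← Submodule.map_comp]
          have : e.toLinearMap ∘ₗ e.symm.toLinearMap = LinearMap.id :=
            LinearMap.ext fun x => e.apply_symm_apply x
          rw [this, Submodule.map_id]
        rcases (em (p = ⊥)) with hb | hb
        · left
          rw [hmapback, hb, Submodule.map_bot]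
        · right
          have := hred p hpI hb
          rw [hmapback, this, Submodule.map_top]
          exact LinearMap.range_eq_top.2 e.surjective
      have hz := h0 n ρ' hρ'ir
      have hrel : e.conj.toLinearMap (Pop f ρ) = Pop f ρ' := by
        unfold Pop
        rw [map_sum]
        refine Finset.sum_congr rfl fun α _ => ?_
        rw [map_smul]
        rfl
      have h00 : e.conj.toLinearMap (Pop f ρ) = e.conj.toLinearMap 0 := by
        rw [hrel, hz, map_zero]
      have h01 := e.conj.injective (show e.conj (Pop f ρ) = e.conj 0 from h00)
      simpa using h01

/-- Completeness: if `Pop f ρ = 0` for every irreducible `ρ`, then `f = 0`. -/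
lemma eq_zero_of_Pop_all [Fintype G] {f : G → ℂ}
    (h0 : ∀ (n : ℕ) (ρ : Representation ℂ G (Fin n → ℂ)), IsIrreducibleRep ρ → Pop f ρ = 0) :
    f = 0 := by
  classical
  set reg : Representation ℂ G (G → ℂ) :=
    { toFun := fun γ => LinearMap.funLeft ℂ ℂ (fun x => γ⁻¹ * x),
      map_one' := by
        refine LinearMap.ext fun u => funext fun x => ?_
        simp [LinearMap.funLeft]
      map_mul' := fun γ δ => by
        refine LinearMap.ext fun u => funext fun x => ?_
        simp only [LinearMap.funLeft_apply, Module.End.mul_apply]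
        congr 1
        group } with hreg
  have hz := Pop_all_reps h0 (Module.finrank ℂ (G → ℂ)) reg le_rfl
  funext β
  have := congrArg (fun (t : _ →ₗ[ℂ] _) =>
    (t (fun x => if x = 1 then (1 : ℂ) else 0)) β⁻¹) hz
  simp only [Pop, LinearMap.coe_sum, Finset.sum_apply, LinearMap.smul_apply,
    LinearMap.zero_apply, Pi.zero_apply, Pi.smul_apply, smul_eq_mul] at this
  have hterm : ∀ α : G, f α * ((reg α⁻¹) (fun x => if x = 1 then (1:ℂ) else 0)) β⁻¹
      = f α * (if α * β⁻¹ = 1 then (1:ℂ) else 0) := by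
    intro α
    congr 1
    simp [hreg, LinearMap.funLeft_apply]
  rw [Finset.sum_congr rfl (fun α _ => hterm α), Finset.sum_eq_single β] at this
  · simpa using this
  · intro α _ hαβ
    have : α * β⁻¹ ≠ 1 := by
      intro h
      exact hαβ (by rwa [mul_inv_eq_one] at h)
    simp [this]
  · intro h
    exact absurd (Finset.mem_univ β) h

end TB

noncomputable section TB2
open LinearMap Finset Module
variable {G : Type*} [Group G] {φ : G →* G}

/-- the chosen intertwiner of a fixed irreducible representation -/
def FIRM (r : FixedIrredRep G φ) : (Fin r.1 → ℂ) ≃ₗ[ℂ] (Fin r.1 → ℂ) :=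
  r.2.2.2.choose

lemma FIRhM (r : FixedIrredRep G φ) :
    ∀ g : G, (FIRM r).toLinearMap ∘ₗ r.2.1 (φ g) = r.2.1 g ∘ₗ (FIRM r).toLinearMap :=
  r.2.2.2.choose_spec

lemma FIRirr (r : FixedIrredRep G φ) : IsIrreducibleRep r.2.1 := r.2.2.1

/-- the twisted character of a fixed irreducible representation -/
def tchar (r : FixedIrredRep G φ) : G → ℂ := fchar r.2.1 (FIRM r)

lemma tchar_TCF (r : FixedIrredRep G φ) : IsTCF φ (tchar r) := fchar_isTCF (FIRhM r)

lemma repEquiv_equivalence : Equivalence (@RepEquiv G _ φ) := by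
  constructor
  · intro r
    exact ⟨LinearEquiv.refl ℂ _, fun g => by
      refine LinearMap.ext fun v => ?_; rfl⟩
  · rintro r s ⟨e, he⟩
    refine ⟨e.symm, fun g => LinearMap.ext fun v => ?_⟩
    have hpt : ∀ x, e (r.2.1 g x) = s.2.1 g (e x) := fun x => by
      have := congrArg (fun (t : _ →ₗ[ℂ] _) => t x) (he g)
      simpa using this
    apply e.injective
    simp only [LinearMap.comp_apply, LinearEquiv.coe_toLinearMap]
    rw [hpt, e.apply_symm_apply, e.apply_symm_apply]
  · rintro r s t ⟨e, he⟩ ⟨e', he'⟩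
    refine ⟨e.trans e', fun g => LinearMap.ext fun v => ?_⟩
    have h1 := congrArg (fun (t : _ →ₗ[ℂ] _) => t v) (he g)
    have h2 := congrArg (fun (t : _ →ₗ[ℂ] _) => t (e v)) (he' g)
    simp only [LinearMap.comp_apply, LinearEquiv.coe_toLinearMap] at h1 h2 ⊢
    simp only [LinearEquiv.trans_apply]
    rw [h1, h2]

lemma quotMk_eq_iff (r s : FixedIrredRep G φ) :
    Quot.mk (@RepEquiv G _ φ) r = Quot.mk _ s ↔ RepEquiv r s :=
  Quot.eq.trans (repEquiv_equivalence.eqvGen_iff)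

lemma Pop_tchar_self [Fintype G] (r : FixedIrredRep G φ) :
    Pop (tchar r) r.2.1
      = ((Fintype.card G : ℂ) / (r.1 : ℂ)) • (FIRM r).symm.toLinearMap :=
  orth_self (FIRirr r) (FIRM r).symm.toLinearMap

lemma Pop_tchar_cross [Fintype G] (r s : FixedIrredRep G φ) (h : ¬ RepEquiv r s) :
    Pop (tchar s) r.2.1 = 0 :=
  orth_cross (FIRirr r) (FIRirr s) h (FIRM s).symm.toLinearMap

lemma Pop_transport [Fintype G] (f : G → ℂ) {n m : ℕ}
    (ρ : Representation ℂ G (Fin n → ℂ)) (σ : Representation ℂ G (Fin m → ℂ))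
    (e : (Fin n → ℂ) ≃ₗ[ℂ] (Fin m → ℂ))
    (he : ∀ g : G, e.toLinearMap ∘ₗ ρ g = σ g ∘ₗ e.toLinearMap)
    (h : Pop f σ = 0) : Pop f ρ = 0 := by
  refine LinearMap.ext fun v => ?_
  have hpt : ∀ g : G, ∀ x, e (ρ g x) = σ g (e x) := fun g x => by
    have := congrArg (fun (t : _ →ₗ[ℂ] _) => t x) (he g)
    simpa using this
  have key : e (Pop f ρ v) = Pop f σ (e v) := by
    unfold Pop
    simp only [LinearMap.coe_sum, Finset.sum_apply, LinearMap.smul_apply, map_sum, map_smul]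
    exact Finset.sum_congr rfl fun α _ => by rw [hpt]
  rw [h, LinearMap.zero_apply] at key
  have := e.injective (show e (Pop f ρ v) = e 0 by rw [key, map_zero])
  simpa using this

lemma FIRM_symm_ne_zero (r : FixedIrredRep G φ) : (FIRM r).symm.toLinearMap ≠ 0 := by
  intro h
  have hn : 0 < r.1 := (FIRirr r).1
  have hv : (Pi.single (⟨0, hn⟩ : Fin r.1) (1:ℂ) : Fin r.1 → ℂ) ≠ 0 := by
    intro hz
    have := congrFun hz ⟨0, hn⟩
    simp at this
  have := congrArg (fun (t : _ →ₗ[ℂ] _) => t (Pi.single (⟨0, hn⟩ : Fin r.1) (1:ℂ))) h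
  simp only [LinearMap.zero_apply, LinearEquiv.coe_toLinearMap] at this
  exact hv ((FIRM r).symm.map_eq_zero_iff.1 this)

theorem reidemeister_number_eq_card_fixed_irreps' {G : Type*} [Group G] [Finite G]
    (φ : G →* G) :
    Nat.card (ReidemeisterSet φ) = Nat.card (Quot (@RepEquiv G _ φ)) := by
  classical
  haveI : Fintype G := Fintype.ofFinite G
  haveI : Finite (ReidemeisterSet φ) :=
    Finite.of_surjective (Quot.mk _) Quot.exists_rep
  haveI : Fintype (ReidemeisterSet φ) := Fintype.ofFinite _
  have hcard : (Fintype.card G : ℂ) ≠ 0 := Nat.cast_ne_zero.2 Fintype.card_ne_zero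
  -- the family of descended twisted characters
  set Φ : Quot (@RepEquiv G _ φ) → (ReidemeisterSet φ → ℂ) := fun q =>
    Quot.lift (tchar q.out) (fun a b hab => by
      obtain ⟨γ, hb⟩ := hab
      rw [hb, tchar_TCF q.out γ a]) with hΦ
  have hΦmk : ∀ q α, Φ q (Quot.mk _ α) = tchar q.out α := fun q α => rfl
  have houtne : ∀ {q q' : Quot (@RepEquiv G _ φ)}, q ≠ q' →
      ¬ RepEquiv q.out q'.out := by
    intro q q' hne hre
    exact hne (by rw [← Quot.out_eq q, ← Quot.out_eq q', (quotMk_eq_iff _ _).2 hre])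
  -- linear independence
  have hli : LinearIndependent ℂ Φ := by
    rw [linearIndependent_iff']
    intro s g hsum i0 hi0
    have hfun : ∑ i ∈ s, g i • tchar i.out = (0 : G → ℂ) := by
      funext α
      have := congrArg (fun t => t (Quot.mk _ α)) hsum
      have := (Finset.sum_apply (a := (Quot.mk _ α : ReidemeisterSet φ)) (s := s)
        (g := fun i => g i • Φ i)).symm.trans this
      rw [Finset.sum_apply]
      exact (Finset.sum_congr rfl fun i _ => rfl).trans this
    have hpop := congrArg (fun t => Pop t i0.out.2.1) hfun
    rw [Pop_sum] at hpop
    have hterm : ∀ i ∈ s, Pop (g i • tchar i.out) i0.out.2.1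
        = if i = i0 then g i0 • (((Fintype.card G : ℂ) / (i0.out.1 : ℂ))
            • (FIRM i0.out).symm.toLinearMap) else 0 := by
      intro i _
      rw [Pop_smul]
      by_cases h : i = i0
      · subst h
        rw [Pop_tchar_self, if_pos rfl]
      · rw [if_neg h, Pop_tchar_cross _ _ (houtne (Ne.symm h)), smul_zero]
    rw [Finset.sum_congr rfl hterm, Finset.sum_ite_eq' s i0, if_pos hi0] at hpop
    have hz : Pop (0 : G → ℂ) i0.out.2.1 = 0 := by
      unfold Pop; simp
    rw [hz] at hpop
    rw [smul_smul] at hpop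
    rcases smul_eq_zero.1 hpop with h | h
    · rcases mul_eq_zero.1 h with h' | h'
      · exact h'
      · exfalso
        apply div_ne_zero hcard (Nat.cast_ne_zero.2 (FIRirr i0.out).1.ne')
        exact h'
    · exact absurd h (FIRM_symm_ne_zero i0.out)
  haveI hQfin : Finite (Quot (@RepEquiv G _ φ)) := hli.finite
  haveI : Fintype (Quot (@RepEquiv G _ φ)) := Fintype.ofFinite _
  -- spanning
  have hsp : ⊤ ≤ Submodule.span ℂ (Set.range Φ) := by
    intro h _
    set f : G → ℂ := fun α => h (Quot.mk _ α) with hf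
    have hTCF : IsTCF φ f := by
      intro γ α
      rw [hf]
      exact congrArg h (Quot.sound ⟨γ, rfl⟩).symm
    choose c hc using fun q : Quot (@RepEquiv G _ φ) =>
      Pop_eq_smul_of_fixed (φ := φ) hTCF (FIRirr q.out) (FIRhM q.out)
    set coef : Quot (@RepEquiv G _ φ) → ℂ :=
      fun q => ((q.out.1 : ℂ) / (Fintype.card G : ℂ)) * c q with hcoef
    set g0 : G → ℂ := f - ∑ q, coef q • tchar q.out with hg0
    have hg0TCF : IsTCF φ g0 := by
      intro γ α
      simp only [hg0, Pi.sub_apply, Finset.sum_apply, Pi.smul_apply, smul_eq_mul]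
      rw [hTCF]
      congr 1
      exact Finset.sum_congr rfl fun q _ => by rw [tchar_TCF q.out γ α]
    have hall : ∀ (n : ℕ) (ρ : Representation ℂ G (Fin n → ℂ)),
        IsIrreducibleRep ρ → Pop g0 ρ = 0 := by
      intro n ρ hρ
      by_cases hfix : ∃ M : (Fin n → ℂ) ≃ₗ[ℂ] (Fin n → ℂ),
          ∀ γ : G, M.toLinearMap ∘ₗ ρ (φ γ) = ρ γ ∘ₗ M.toLinearMap
      · obtain ⟨M, hM⟩ := hfix
        set r : FixedIrredRep G φ := ⟨n, ρ, hρ, M, hM⟩ with hr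
        set q0 : Quot (@RepEquiv G _ φ) := Quot.mk _ r with hq0
        have hre : RepEquiv r q0.out := by
          rw [← quotMk_eq_iff]
          rw [hq0, Quot.out_eq]
        obtain ⟨e, he⟩ := hre
        refine Pop_transport g0 ρ q0.out.2.1 e he ?_
        rw [hg0, Pop_sub, Pop_sum]
        have hterm : ∀ q ∈ (Finset.univ : Finset (Quot (@RepEquiv G _ φ))),
            Pop (coef q • tchar q.out) q0.out.2.1
            = if q = q0 then coef q0 • (((Fintype.card G : ℂ) / (q0.out.1 : ℂ))
                • (FIRM q0.out).symm.toLinearMap) else 0 := by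
          intro q _
          rw [Pop_smul]
          by_cases hqq : q = q0
          · subst hqq
            rw [Pop_tchar_self, if_pos rfl]
          · rw [if_neg hqq, Pop_tchar_cross _ _ (houtne (Ne.symm hqq)), smul_zero]
        rw [Finset.sum_congr rfl hterm, Finset.sum_ite_eq' Finset.univ q0,
          if_pos (Finset.mem_univ _), hc q0]
        rw [smul_smul, hcoef]
        have hn0 : (q0.out.1 : ℂ) ≠ 0 := Nat.cast_ne_zero.2 (FIRirr q0.out).1.ne'
        have : (q0.out.1 : ℂ) / (Fintype.card G : ℂ) * c q0
            * ((Fintype.card G : ℂ) / (q0.out.1 : ℂ)) = c q0 := by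
          field_simp
        rw [this, sub_self]
      · exact Pop_eq_zero_of_not_fixed hg0TCF hρ hfix
    have hg00 : g0 = 0 := eq_zero_of_Pop_all hall
    have hfeq : f = ∑ q, coef q • tchar q.out := by
      have := sub_eq_zero.1 (hg0 ▸ hg00)
      exact this
    have hh : h = ∑ q, coef q • Φ q := by
      funext x
      obtain ⟨α, rfl⟩ := Quot.exists_rep x
      have h1 : h (Quot.mk _ α) = f α := rfl
      rw [h1, hfeq]
      refine (Finset.sum_apply α _ _).trans (Eq.trans ?_ (Finset.sum_apply
        (a := (Quot.mk _ α : ReidemeisterSet φ)) (s := Finset.univ) (g := fun q => coef q • Φ q)).symm)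
      exact Finset.sum_congr rfl fun q _ => rfl
    rw [hh]
    exact Submodule.sum_mem _ fun q _ =>
      Submodule.smul_mem _ _ (Submodule.subset_span ⟨q, rfl⟩)
  let b : Basis (Quot (@RepEquiv G _ φ)) ℂ (ReidemeisterSet φ → ℂ) := Basis.mk hli hsp
  have h1 : Nat.card (ReidemeisterSet φ) = finrank ℂ (ReidemeisterSet φ → ℂ) := by
    rw [Module.finrank_pi, Nat.card_eq_fintype_card]
  rw [h1, finrank_eq_card_basis b, Nat.card_eq_fintype_card]

end TB2


/-- For an endomorphism `φ` of a finite group `G`, the Reidemeister number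
`R(φ)` equals the number of equivalence classes of irreducible finite-dimensional complex
representations `ρ` of `G` with `ρ ∘ φ` equivalent to `ρ`. -/
theorem reidemeister_number_eq_card_fixed_irreps {G : Type*} [Group G] [Finite G]
    (φ : G →* G) :
    Nat.card (ReidemeisterSet φ) = Nat.card (Quot (@RepEquiv G _ φ)) :=
  reidemeister_number_eq_card_fixed_irreps' φ
end

section
/- Let G be a finitely generated abelian group and φ : G → G an endomorphism such that R(φ) is finite. Then R(φ) equals the number of fixed points of the dual map φ̂ on the Pontryagin dual of G, i.e. R(φ) = #{χ ∈ Ĝ : χ∘φ = χ}. -/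
/-- For a finite commutative group `Q`, the number of characters `Q →* Circle` equals `|Q|`. -/
lemma card_monoidHom_circle (Q : Type*) [CommGroup Q] [Finite Q] :
    Nat.card (Q →* Circle) = Nat.card Q := by
  have hexp : 0 < Monoid.exponent Q :=
    Monoid.ExponentExists.exponent_pos (Monoid.ExponentExists.of_finite)
  have : NeZero ((Monoid.exponent Q : ℂ)) := ⟨by exact_mod_cast hexp.ne'⟩
  -- `Q →* Circle` is in bijection with `Q →* ℂˣ`
  have e : (Q →* Circle) ≃ (Q →* ℂˣ) := by
    refine
      { toFun := fun χ => Circle.toUnits.comp χ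
        invFun := fun χ => ?_
        left_inv := ?_
        right_inv := ?_ }
    · refine
        { toFun := fun q => ⟨((χ q : ℂˣ) : ℂ), ?_⟩
          map_one' := ?_
          map_mul' := ?_ }
      · have hq : (χ q) ^ Monoid.exponent Q = 1 := by
          rw [← map_pow, Monoid.pow_exponent_eq_one, map_one]
        have habs : (‖((χ q : ℂˣ) : ℂ)‖) ^ Monoid.exponent Q = 1 := by
          rw [← norm_pow, ← Units.val_pow_eq_pow_val, hq, Units.val_one, norm_one]
        have : ‖((χ q : ℂˣ) : ℂ)‖ = 1 := by
          rcases (pow_eq_one_iff_of_ne_zero hexp.ne').mp habs with h | ⟨h, _⟩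
          · exact h
          · have h0 : (0:ℝ) ≤ ‖((χ q : ℂˣ) : ℂ)‖ := norm_nonneg _
            linarith
        exact mem_sphere_zero_iff_norm.2 this
      · ext; simp
      · intro a b; ext; simp; rfl
    · intro χ; ext q; rfl
    · intro χ; ext q; rfl
  rw [Nat.card_congr e]
  obtain ⟨e'⟩ := CommGroup.monoidHom_mulEquiv_of_hasEnoughRootsOfUnity Q ℂ
  exact Nat.card_congr e'.toEquiv

/-- Let `G` be a finitely generated abelian group and `φ : G → G` an
endomorphism with finite Reidemeister number. Then `R(φ)` equals the number of fixed points
of the dual map `φ̂ : χ ↦ χ ∘ φ` on the Pontryagin dual `Ĝ = G →* Circle`. -/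
theorem reidemeister_number_eq_card_fixed_characters {G : Type*} [CommGroup G] [Group.FG G]
    (φ : G →* G) (hfin : Finite (ReidemeisterSet φ)) :
    Nat.card (ReidemeisterSet φ) =
      Nat.card {χ : G →* Circle // χ.comp φ = χ} := by
  classical
  -- the homomorphism `γ ↦ γ * (φ γ)⁻¹`
  set ψ : G →* G := MonoidHom.id G / φ with hψ
  have hψapp : ∀ γ : G, ψ γ = γ * (φ γ)⁻¹ := fun γ => by
    simp [hψ, div_eq_mul_inv]
  set H : Subgroup G := ψ.range with hH
  -- the Reidemeister set is the quotient `G ⧸ H`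
  have e1 : ReidemeisterSet φ ≃ G ⧸ H := by
    refine Quot.congr (Equiv.refl G) fun a b => ?_
    rw [QuotientGroup.leftRel_apply]
    constructor
    · rintro ⟨γ, rfl⟩
      refine ⟨γ, ?_⟩
      simp only [Equiv.refl_apply]
      rw [hψapp, mul_comm γ a, mul_assoc, inv_mul_cancel_left]
    · rintro ⟨γ, hγ⟩
      refine ⟨γ, ?_⟩
      simp only [Equiv.refl_apply] at hγ ⊢
      rw [hψapp] at hγ
      have hb : b = a * (γ * (φ γ)⁻¹) := by rw [hγ, mul_inv_cancel_left]
      rw [hb, ← mul_assoc, mul_comm a γ]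
  -- fixed characters correspond to characters of the quotient
  have hker : ∀ (χ : G →* Circle), χ.comp φ = χ → ∀ g ∈ H, χ g = 1 := by
    intro χ h g hg
    obtain ⟨γ, rfl⟩ := hg
    have hχφ : χ (φ γ) = χ γ := DFunLike.congr_fun h γ
    rw [hψapp, map_mul, map_inv, hχφ, mul_inv_cancel]
  have hmk : ∀ g : G, (QuotientGroup.mk (φ g) : G ⧸ H) = QuotientGroup.mk g := by
    intro g
    rw [QuotientGroup.eq]
    exact ⟨g, by rw [hψapp, mul_comm]⟩
  have e2 : {χ : G →* Circle // χ.comp φ = χ} ≃ ((G ⧸ H) →* Circle) := by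
    refine
      { toFun := fun χ => QuotientGroup.lift H χ.1 (hker χ.1 χ.2)
        invFun := fun η => ⟨η.comp (QuotientGroup.mk' H), ?_⟩
        left_inv := ?_
        right_inv := ?_ }
    · ext g
      simpa using congrArg (fun x => ((η x : Circle) : ℂ)) (hmk g)
    · rintro ⟨χ, h⟩
      ext g
      rfl
    · intro η
      exact MonoidHom.ext fun q => QuotientGroup.induction_on q fun g => rfl
  have hQfin : Finite (G ⧸ H) := Finite.of_equiv _ e1
  rw [Nat.card_congr e1, Nat.card_congr e2, card_monoidHom_circle]
end

section
/- Let φ : G → G be an endomorphism of a group G, and let H be a subgroup of G such that φ(H) ⊆ H and for every x ∈ G there exists n ∈ ℕ with φ^n(x) ∈ H. Then the map sending the φ|_H-conjugacy class of x ∈ H to the φ-conjugacy class of x in G is a bijection between the set of φ|_H-conjugacy classes of H and the set of φ-conjugacy classes of G; in particular R(φ) = R(φ|_H), where φ|_H : H → H is the restriction of φ. -/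
section Aux14

variable {G : Type*} [Group G]

private lemma aux14_rG_equiv (φ : Monoid.End G) :
    Equivalence (fun a b : G => ∃ γ : G, b = γ * a * (φ γ)⁻¹) := by
  constructor
  · intro a; exact ⟨1, by simp⟩
  · rintro a b ⟨γ, rfl⟩
    exact ⟨γ⁻¹, by rw [map_inv, inv_inv]; group⟩
  · rintro a b c ⟨γ, rfl⟩ ⟨δ, rfl⟩
    exact ⟨δ * γ, by rw [map_mul, mul_inv_rev]; group⟩

private lemma aux14_comm (φ : Monoid.End G) (n : ℕ) (x : G) :
    φ ((φ ^ n) x) = (φ ^ n) (φ x) := by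
  simp only [Monoid.End.coe_pow]
  rw [← Function.iterate_succ_apply' φ n x, Function.iterate_succ_apply]

private lemma aux14_succ (φ : Monoid.End G) (n : ℕ) (x : G) :
    (φ ^ (n + 1)) x = φ ((φ ^ n) x) := by
  simp only [Monoid.End.coe_pow]
  exact Function.iterate_succ_apply' φ n x

end Aux14

/-- Let `φ : G → G` be an endomorphism and `H ≤ G` a subgroup with
`φ(H) ⊆ H` such that every `x ∈ G` has `φⁿ(x) ∈ H` for some `n`. Then the map sending the
`φ|_H`-conjugacy class of `x ∈ H` to the `φ`-conjugacy class of `x` in `G` is a bijection;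
in particular `R(φ) = R(φ|_H)`. -/
theorem reidemeister_classes_restrict_bijective {G : Type*} [Group G] (φ : Monoid.End G)
    (H : Subgroup G) (hH : ∀ h ∈ H, φ h ∈ H)
    (hev : ∀ x : G, ∃ n : ℕ, (φ ^ n) x ∈ H) :
    ∃ F : Quot (fun a b : H => ∃ γ : H, (b : G) = (γ : G) * (a : G) * (φ (γ : G))⁻¹) →
        Quot (fun a b : G => ∃ γ : G, b = γ * a * (φ γ)⁻¹),
      (∀ a : H, F (Quot.mk _ a) = Quot.mk _ (a : G)) ∧
      Function.Bijective F ∧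
      Nat.card (Quot (fun a b : G => ∃ γ : G, b = γ * a * (φ γ)⁻¹)) =
        Nat.card
          (Quot (fun a b : H => ∃ γ : H, (b : G) = (γ : G) * (a : G) * (φ (γ : G))⁻¹)) := by
  set rH : H → H → Prop := fun a b : H => ∃ γ : H, (b : G) = (γ : G) * (a : G) * (φ (γ : G))⁻¹
    with hrH
  set rG : G → G → Prop := fun a b : G => ∃ γ : G, b = γ * a * (φ γ)⁻¹ with hrG
  -- powers of φ preserve H
  have hpow : ∀ n : ℕ, ∀ h ∈ H, (φ ^ n) h ∈ H := by
    intro n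
    induction n with
    | zero => intro h hh; simpa using hh
    | succ n ih =>
      intro h hh
      rw [pow_succ]
      exact ih _ (hH h hh)
  -- the single step h ↦ φ h stays in the same class (in H)
  have stepH : ∀ h : H, Quot.mk rH h = Quot.mk rH ⟨φ h, hH h h.2⟩ := by
    intro h
    apply Quot.sound
    refine ⟨h⁻¹, ?_⟩
    push_cast
    rw [map_inv, inv_inv]
    group
  have stepG : ∀ x : G, Quot.mk rG x = Quot.mk rG (φ x) := by
    intro x
    apply Quot.sound
    exact ⟨x⁻¹, by rw [map_inv, inv_inv]; group⟩
  have iterH : ∀ (n : ℕ) (h : H), Quot.mk rH h = Quot.mk rH ⟨(φ ^ n) h, hpow n h h.2⟩ := by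
    intro n
    induction n with
    | zero => intro h; exact congrArg _ (Subtype.ext (by simp))
    | succ n ih =>
      intro h
      rw [ih h, stepH ⟨(φ ^ n) h, hpow n h h.2⟩]
      exact congrArg _ (Subtype.ext (aux14_succ φ n (h : G)).symm)
  have iterG : ∀ (n : ℕ) (x : G), Quot.mk rG x = Quot.mk rG ((φ ^ n) x) := by
    intro n
    induction n with
    | zero => intro x; simp
    | succ n ih =>
      intro x
      rw [ih x, stepG ((φ ^ n) x), aux14_succ φ n x]
  have hsound : ∀ a b : H, rH a b → Quot.mk rG (a : G) = Quot.mk rG (b : G) := by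
    rintro a b ⟨γ, hγ⟩
    exact Quot.sound ⟨(γ : G), hγ⟩
  have hbij : Function.Bijective
      (Quot.lift (fun h : H => Quot.mk rG (h : G)) (fun a b h => hsound a b h)) := by
    constructor
    · -- injective
      intro x y
      induction x using Quot.ind with | _ a =>
      induction y using Quot.ind with | _ b =>
      intro hab
      simp only [Quot.lift_mk] at hab
      rw [Quot.eq] at hab
      obtain ⟨γ, hb⟩ := ((aux14_rG_equiv φ).eqvGen_iff).mp hab
      obtain ⟨n, hn⟩ := hev γ
      rw [iterH n a, iterH n b]
      apply Quot.sound
      refine ⟨⟨(φ ^ n) γ, hn⟩, ?_⟩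
      show (φ ^ n) (b : G) = (φ ^ n) γ * (φ ^ n) (a : G) * (φ ((φ ^ n) γ))⁻¹
      rw [aux14_comm φ n γ, hb, map_mul, map_mul, map_inv]
    · -- surjective
      intro y
      induction y using Quot.ind with | _ x =>
      obtain ⟨n, hn⟩ := hev x
      exact ⟨Quot.mk rH ⟨(φ ^ n) x, hn⟩, (iterG n x).symm⟩
  exact ⟨_, fun a => rfl, hbij, (Nat.card_eq_of_bijective _ hbij).symm⟩
end

section
/- For every integer k with |k| ≠ 1, every positive integer m, and every natural number n: Σ_{d∣n} μ(d)·gcd(1 − k^{n/d}, m) ≡ 0 mod n, where gcd(1 − k^j, m) denotes the greatest common divisor of 1 − k^j and m (taken as a nonnegative integer). -/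
open Function Finset

/-- The number of solutions of `c * x = 0` in `ZMod m` is `gcd c m`. -/
lemma card_mulLeft_ker (m : ℕ) [NeZero m] (c : ℤ) :
    Nat.card {x : ZMod m // (c : ZMod m) * x = 0} = Int.gcd c m := by
  set a : ZMod m := (c : ZMod m) with ha
  let ψ : ZMod m →+ ZMod m := AddMonoidHom.mulLeft a
  have hker : Nat.card {x : ZMod m // (c : ZMod m) * x = 0} = Nat.card ψ.ker := by
    refine Nat.card_congr (Equiv.subtypeEquivRight fun x => ?_)
    simp [ψ, AddMonoidHom.mem_ker, ha]
  have hrange : ψ.range = AddSubgroup.zmultiples a := by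
    ext y
    constructor
    · rintro ⟨x, rfl⟩
      refine ⟨(x.val : ℤ), ?_⟩
      show (x.val : ℤ) • a = a * x
      rw [zsmul_eq_mul, Int.cast_natCast, ZMod.natCast_val, ZMod.cast_id, mul_comm]
    · rintro ⟨z, rfl⟩
      refine ⟨(z : ZMod m), ?_⟩
      show a * (z : ZMod m) = z • a
      rw [zsmul_eq_mul, mul_comm]
  have horder : addOrderOf a = m / m.gcd c.natAbs := by
    rcases Int.natAbs_eq c with h | h
    · have ha' : a = ((c.natAbs : ℕ) : ZMod m) := by
        rw [ha]; conv_lhs => rw [h]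
        rw [Int.cast_natCast]
      rw [ha']
      exact ZMod.addOrderOf_coe _ (NeZero.ne m)
    · have ha' : a = -((c.natAbs : ℕ) : ZMod m) := by
        rw [ha]; conv_lhs => rw [h]
        rw [Int.cast_neg, Int.cast_natCast]
      rw [ha', addOrderOf_neg]
      exact ZMod.addOrderOf_coe _ (NeZero.ne m)
  have hrangecard : Nat.card ψ.range = m / m.gcd c.natAbs := by
    rw [hrange, Nat.card_zmultiples, horder]
  have h1 : Nat.card (ZMod m) = Nat.card (ZMod m ⧸ ψ.ker) * Nat.card ψ.ker :=
    AddSubgroup.card_eq_card_quotient_mul_card_addSubgroup ψ.ker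
  have h2 : Nat.card (ZMod m ⧸ ψ.ker) = Nat.card ψ.range :=
    Nat.card_congr (QuotientAddGroup.quotientKerEquivRange ψ).toEquiv
  have hm : 0 < m := Nat.pos_of_ne_zero (NeZero.ne m)
  have hg : m.gcd c.natAbs ∣ m := Nat.gcd_dvd_left _ _
  have hgpos : 0 < m.gcd c.natAbs := Nat.gcd_pos_of_pos_left _ hm
  have hqpos : 0 < m / m.gcd c.natAbs := Nat.div_pos (Nat.le_of_dvd hm hg) hgpos
  have hcard : Nat.card (ZMod m) = m := Nat.card_zmod m
  have key0 : m = (m / m.gcd c.natAbs) * Nat.card ψ.ker := by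
    conv_lhs => rw [← hcard]
    rw [h1, h2, hrangecard]
  have key : (m / m.gcd c.natAbs) * Nat.card ψ.ker = (m / m.gcd c.natAbs) * m.gcd c.natAbs :=
    key0.symm.trans (Nat.div_mul_cancel hg).symm
  have : Nat.card ψ.ker = m.gcd c.natAbs := Nat.eq_of_mul_eq_mul_left hqpos key
  rw [hker, this, Int.gcd]
  simp [Nat.gcd_comm]

/-- The number of fixed points of the `j`-th iterate of multiplication by `k` on `ZMod m`
is `gcd (1 - k^j) m`. -/
lemma card_fix (m : ℕ) [NeZero m] (k : ℤ) (j : ℕ) :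
    Nat.card {x : ZMod m // (fun y : ZMod m => (k : ZMod m) * y)^[j] x = x}
      = Int.gcd (1 - k ^ j) m := by
  rw [← card_mulLeft_ker m (1 - k ^ j)]
  refine Nat.card_congr (Equiv.subtypeEquivRight fun x => ?_)
  rw [mul_left_iterate]
  push_cast
  rw [sub_mul, one_mul, sub_eq_zero]
  exact ⟨fun h => h.symm, fun h => h.symm⟩

open ArithmeticFunction in
/-- For every integer `k` with `|k| ≠ 1`, every positive integer `m` and
every positive natural number `n`: `Σ_{d∣n} μ(d)·gcd(1 − k^{n/d}, m) ≡ 0 mod n`. -/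
theorem gcd_one_sub_pow_congruence (k : ℤ) (hk : k.natAbs ≠ 1) (m : ℕ) (hm : 0 < m)
    (n : ℕ) (hn : 0 < n) :
    (n : ℤ) ∣ ∑ d ∈ n.divisors,
      (moebius d) * (Int.gcd (1 - k ^ (n / d)) (m : ℤ) : ℤ) := by
  haveI : NeZero m := ⟨hm.ne'⟩
  set T : ZMod m → ZMod m := fun y => (k : ZMod m) * y with hT
  set Fix : ℕ → ℤ := fun j => ((univ.filter (fun x : ZMod m => T^[j] x = x)).card : ℤ) with hFix
  set G : ℕ → ℤ := fun d =>
    ((univ.filter (fun x : ZMod m => minimalPeriod T x = d)).card : ℤ) with hG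
  -- Step A: Fix j = ∑_{d ∣ j} G d for j > 0
  have stepA : ∀ j > 0, ∑ d ∈ j.divisors, G d = Fix j := by
    intro j hj
    have hcover : ∀ x ∈ univ.filter (fun x : ZMod m => T^[j] x = x),
        minimalPeriod T x ∈ j.divisors := by
      intro x hx
      rw [mem_filter] at hx
      rw [Nat.mem_divisors]
      exact ⟨IsPeriodicPt.minimalPeriod_dvd hx.2, hj.ne'⟩
    have hnat : (univ.filter (fun x : ZMod m => T^[j] x = x)).card
        = ∑ d ∈ j.divisors,
            (univ.filter (fun x : ZMod m => minimalPeriod T x = d)).card := by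
      rw [Finset.card_eq_sum_card_fiberwise hcover]
      refine Finset.sum_congr rfl fun d hd => ?_
      congr 1
      ext x
      simp only [mem_filter, mem_univ, true_and]
      constructor
      · rintro ⟨_, h2⟩; exact h2
      · intro hmin
        exact ⟨isPeriodicPt_iff_minimalPeriod_dvd.mpr
          (hmin ▸ (Nat.mem_divisors.mp hd).1), hmin⟩
    simp only [hG, hFix]
    exact_mod_cast hnat.symm
  -- Step B: Möbius inversion
  have stepB : ∑ x ∈ n.divisorsAntidiagonal, (moebius x.1 : ℤ) • Fix x.2 = G n :=
    (ArithmeticFunction.sum_eq_iff_sum_smul_moebius_eq.mp stepA) n hn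
  -- Rewrite the goal sum as the antidiagonal sum
  have hFixgcd : ∀ j, Fix j = (Int.gcd (1 - k ^ j) (m : ℤ) : ℤ) := by
    intro j
    rw [hFix]
    norm_cast
    rw [← card_fix m k j, Nat.card_eq_fintype_card, Fintype.card_subtype]
  have hgoal : ∑ d ∈ n.divisors, (moebius d : ℤ) * (Int.gcd (1 - k ^ (n / d)) (m : ℤ) : ℤ)
      = G n := by
    rw [← stepB, Nat.sum_divisorsAntidiagonal (fun i j => (moebius i : ℤ) • Fix j)]
    refine Finset.sum_congr rfl fun d hd => ?_
    rw [hFixgcd, smul_eq_mul]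
  rw [hgoal]
  -- Step C: n divides G n
  set S : Finset (ZMod m) := univ.filter (fun x : ZMod m => minimalPeriod T x = n) with hS
  suffices h : (n : ℕ) ∣ S.card by
    have := Int.natCast_dvd_natCast.mpr h
    simpa only [hG, hS] using this
  set f : ZMod m → Finset (ZMod m) := fun x => (Finset.range n).image (fun i => T^[i] x) with hf
  have hperS : ∀ x ∈ S, IsPeriodicPt T n x := by
    intro x hx
    rw [hS, mem_filter] at hx
    exact hx.2 ▸ isPeriodicPt_minimalPeriod T x
  have hmemper : ∀ x ∈ S, x ∈ periodicPts T := fun x hx =>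
    mk_mem_periodicPts hn (hperS x hx)
  -- orbit shift invariance
  have key : ∀ x ∈ S, ∀ i, f (T^[i] x) = f x := by
    intro x hx i
    have hper := hperS x hx
    ext z
    simp only [hf, mem_image, mem_range]
    constructor
    · rintro ⟨j, hj, rfl⟩
      refine ⟨(j + i) % n, Nat.mod_lt _ hn, ?_⟩
      rw [hper.iterate_mod_apply, iterate_add_apply]
    · rintro ⟨j, hj, rfl⟩
      refine ⟨(j + (n - i % n)) % n, Nat.mod_lt _ hn, ?_⟩
      rw [← iterate_add_apply]
      have hmod : ((j + (n - i % n)) % n + i) % n = j % n := by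
        have h1 : (j + (n - i % n)) % n + i ≡ (j + (n - i % n)) + i [MOD n] :=
          (Nat.mod_modEq _ n).add_right i
        have h2 : (j + (n - i % n)) + i ≡ (j + (n - i % n)) + i % n [MOD n] :=
          Nat.ModEq.add_left _ (Nat.mod_modEq i n).symm
        have h3 : (j + (n - i % n)) + i % n = j + n := by
          have : i % n ≤ n := (Nat.mod_lt i hn).le
          omega
        calc ((j + (n - i % n)) % n + i) % n
            = ((j + (n - i % n)) + i) % n := h1
          _ = ((j + (n - i % n)) + i % n) % n := h2
          _ = (j + n) % n := by rw [h3]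
          _ = j % n := Nat.add_mod_right j n
      rw [← hper.iterate_mod_apply, hmod, Nat.mod_eq_of_lt hj]
  have hcard_orbit : ∀ x ∈ S, (f x).card = n := by
    intro x hx
    rw [hf]
    have hx' : minimalPeriod T x = n := by
      rw [hS, mem_filter] at hx; exact hx.2
    have hinj : Set.InjOn (fun i => T^[i] x) ↑(Finset.range n) := by
      rw [Finset.coe_range, ← hx']
      exact iterate_injOn_Iio_minimalPeriod
    rw [Finset.card_image_of_injOn hinj, Finset.card_range]
  have fiber_eq : ∀ x ∈ S, S.filter (fun y => f y = f x) = f x := by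
    intro x hx
    ext y
    simp only [mem_filter]
    constructor
    · rintro ⟨hyS, hfy⟩
      have : y ∈ f y := by
        rw [hf]
        simp only [mem_image, mem_range]
        exact ⟨0, hn, rfl⟩
      rwa [hfy] at this
    · intro hy
      rw [hf] at hy
      simp only [mem_image, mem_range] at hy
      obtain ⟨i, hi, rfl⟩ := hy
      have hyS : T^[i] x ∈ S := by
        rw [hS, mem_filter]
        refine ⟨mem_univ _, ?_⟩
        rw [minimalPeriod_apply_iterate (hmemper x hx) i]
        rw [hS, mem_filter] at hx; exact hx.2
      exact ⟨hyS, key x hx i⟩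
  have hpart : S.card = ∑ t ∈ S.image f, (S.filter (fun y => f y = t)).card :=
    Finset.card_eq_sum_card_fiberwise (fun x hx => Finset.mem_image_of_mem f hx)
  rw [hpart]
  have : ∀ t ∈ S.image f, (S.filter (fun y => f y = t)).card = n := by
    intro t ht
    obtain ⟨x, hx, rfl⟩ := Finset.mem_image.mp ht
    rw [fiber_eq x hx, hcard_orbit x hx]
  rw [Finset.sum_congr rfl this, Finset.sum_const, smul_eq_mul]
  exact dvd_mul_left n _
end

section
/- Let m be a positive integer and d an integer with gcd(d,m) = 1 and |d| ≠ 1. For each divisor s of m let φ_d(s) denote the order of the multiplicative subgroup generated by d in (ℤ/sℤ)^× (the multiplicative order of d mod s), and let φ denote the Euler totient function. For 1 ≤ t ≤ φ_d(m) define a(t) = Σ_{s∣m, φ_d(m) ∣ t·φ_d(s)} φ(s)/φ_d(s). Then each a(t) is a natural number, and for every n ≥ 1: gcd(1 − d^n, m) = Σ_{t=1}^{φ_d(m)} a(t)·exp(2πi·n·t/φ_d(m)). -/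
open Finset Complex

private lemma sum_exp_aux (N : ℕ) (hN : 0 < N) (n : ℕ) :
    ∑ j ∈ Icc 1 N, Complex.exp (2 * Real.pi * Complex.I * n * j / N) =
      if N ∣ n then (N : ℂ) else 0 := by
  have hN0 : (N : ℂ) ≠ 0 := Nat.cast_ne_zero.mpr hN.ne'
  set x : ℂ := Complex.exp (2 * Real.pi * Complex.I * n / N) with hx
  have hterm : ∀ j : ℕ, Complex.exp (2 * Real.pi * Complex.I * n * j / N) = x ^ j := by
    intro j
    rw [hx, ← Complex.exp_nat_mul]
    ring_nf
  have hζ : IsPrimitiveRoot (Complex.exp (2 * Real.pi * Complex.I / N)) N :=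
    Complex.isPrimitiveRoot_exp N hN.ne'
  have hxz : x = Complex.exp (2 * Real.pi * Complex.I / N) ^ n := by
    rw [← Complex.exp_nat_mul, hx]
    ring_nf
  have hx1 : x = 1 ↔ N ∣ n := by
    rw [hxz]
    exact hζ.pow_eq_one_iff_dvd n
  have hxN : x ^ N = 1 := by
    rw [← Complex.exp_nat_mul, Complex.exp_eq_one_iff]
    exact ⟨n, by rw [Int.cast_natCast]; field_simp⟩
  simp only [hterm]
  by_cases h : N ∣ n
  · simp [hx1.mpr h, h, Nat.card_Icc]
  · rw [if_neg h]
    have hx1' : x ≠ 1 := fun hh => h (hx1.mp hh)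
    have : ∑ j ∈ Icc 1 N, x ^ j = ∑ j ∈ range N, x ^ (1 + j) := by
      rw [← Finset.Ico_add_one_right_eq_Icc, Finset.sum_Ico_eq_sum_range]
      simp
    rw [this]
    simp only [pow_add, pow_one]
    rw [← Finset.mul_sum, geom_sum_eq hx1', hxN]
    simp

private lemma sum_exp_filter (N g : ℕ) (hN : 0 < N) (hg : 0 < g) (n : ℕ) :
    ∑ t ∈ Icc 1 (g * N), (if g ∣ t then
        Complex.exp (2 * Real.pi * Complex.I * n * t / (g * N : ℕ)) else 0) =
      if N ∣ n then (N : ℂ) else 0 := by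
  rw [← Finset.sum_filter, ← sum_exp_aux N hN n]
  refine Finset.sum_nbij' (fun t => t / g) (fun j => g * j) ?_ ?_ ?_ ?_ ?_
  · intro t ht
    simp only [Finset.mem_filter, Finset.mem_Icc] at ht
    obtain ⟨⟨h1, h2⟩, hdvd⟩ := ht
    simp only [Finset.mem_Icc]
    obtain ⟨c, rfl⟩ := hdvd
    rw [Nat.mul_div_cancel_left _ hg]
    constructor
    · rcases Nat.eq_zero_or_pos c with rfl | hc
      · omega
      · exact hc
    · exact Nat.le_of_mul_le_mul_left h2 hg
  · intro j hj
    simp only [Finset.mem_Icc] at hj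
    simp only [Finset.mem_filter, Finset.mem_Icc]
    exact ⟨⟨by nlinarith [hj.1], Nat.mul_le_mul_left g hj.2⟩, Dvd.intro _ rfl⟩
  · intro t ht
    simp only [Finset.mem_filter] at ht
    exact Nat.mul_div_cancel' ht.2
  · intro j _
    exact Nat.mul_div_cancel_left _ hg
  · intro t ht
    simp only [Finset.mem_filter, Finset.mem_Icc] at ht
    obtain ⟨⟨h1, h2⟩, c, rfl⟩ := ht
    rw [Nat.mul_div_cancel_left _ hg]
    congr 1
    have hgc : (g : ℂ) ≠ 0 := Nat.cast_ne_zero.mpr hg.ne'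
    have hNc : (N : ℂ) ≠ 0 := Nat.cast_ne_zero.mpr hN.ne'
    push_cast
    field_simp

private lemma isUnit_aux {m : ℕ} {d : ℤ} (hcop : Int.gcd d (m : ℤ) = 1) {s : ℕ} (hs : s ∣ m) :
    IsUnit ((d : ZMod s)) := by
  have h1 : Int.gcd d (s : ℤ) = 1 := by
    have : (Int.gcd d (s : ℤ) : ℤ) ∣ (Int.gcd d (m : ℤ) : ℤ) :=
      Int.dvd_coe_gcd (Int.gcd_dvd_left _ _) ((Int.gcd_dvd_right _ _).trans (by exact_mod_cast hs))
    have h2 : Int.gcd d (s : ℤ) ∣ Int.gcd d (m : ℤ) := Int.ofNat_dvd.mp (by exact_mod_cast this)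
    rw [hcop] at h2
    exact Nat.dvd_one.mp h2
  have hc : IsCoprime d (s : ℤ) := Int.isCoprime_iff_gcd_eq_one.mpr h1
  have := hc.map (Int.castRingHom (ZMod s))
  simp only [map_intCast, map_natCast, ZMod.natCast_self] at this
  exact (isCoprime_zero_right.mp this)

private lemma order_facts {m : ℕ} (hm : 0 < m) {d : ℤ} (hcop : Int.gcd d (m : ℤ) = 1)
    {s : ℕ} (hs : s ∣ m) (hs0 : 0 < s) :
    0 < orderOf ((d : ZMod s)) ∧ orderOf ((d : ZMod s)) ∣ Nat.totient s ∧
      orderOf ((d : ZMod s)) ∣ orderOf ((d : ZMod m)) := by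
  haveI : NeZero s := ⟨hs0.ne'⟩
  haveI : NeZero m := ⟨hm.ne'⟩
  obtain ⟨u, hu⟩ := isUnit_aux hcop hs
  have hord : orderOf ((d : ZMod s)) = orderOf u := by rw [← hu, orderOf_units]
  refine ⟨?_, ?_, ?_⟩
  · rw [hord]; exact orderOf_pos u
  · rw [hord, ← ZMod.card_units_eq_totient s]
    exact orderOf_dvd_card
  · have : ((ZMod.castHom hs (ZMod s)).toMonoidHom) ((d : ZMod m)) = (d : ZMod s) := by
      simp
    rw [← this]
    exact orderOf_map_dvd _ _

private lemma gcd_eq_sum_aux {m : ℕ} (hm : 0 < m) {d : ℤ} (hcop : Int.gcd d (m : ℤ) = 1)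
    (n : ℕ) :
    Int.gcd (1 - d ^ n) (m : ℤ) =
      ∑ s ∈ m.divisors.filter (fun s => orderOf ((d : ZMod s)) ∣ n), Nat.totient s := by
  set g : ℕ := Int.gcd (1 - d ^ n) (m : ℤ) with hg
  have hgm : g ∣ m := Int.ofNat_dvd.mp
    (by exact_mod_cast (Int.gcd_dvd_right _ _ : ((Int.gcd (1 - d ^ n) (m:ℤ) : ℤ)) ∣ (m:ℤ)))
  have key : ∀ s ∈ m.divisors, (s ∣ g ↔ orderOf ((d : ZMod s)) ∣ n) := by
    intro s hsmem
    obtain ⟨hsm, -⟩ := Nat.mem_divisors.mp hsmem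
    have hs0 : 0 < s := Nat.pos_of_mem_divisors hsmem
    have hdvd_iff : (s : ℤ) ∣ 1 - d ^ n ↔ ((d : ZMod s)) ^ n = 1 := by
      rw [← ZMod.intCast_zmod_eq_zero_iff_dvd]
      push_cast
      rw [sub_eq_zero, eq_comm]
    rw [orderOf_dvd_iff_pow_eq_one, ← hdvd_iff]
    constructor
    · intro h
      exact_mod_cast (Int.ofNat_dvd.mpr h).trans (Int.gcd_dvd_left _ _)
    · intro h
      exact Int.ofNat_dvd.mp (by exact_mod_cast Int.dvd_coe_gcd h (by exact_mod_cast Int.ofNat_dvd.mpr hsm))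
  rw [← Nat.sum_totient g, ← Nat.divisors_filter_dvd_of_dvd hm.ne' hgm]
  exact Finset.sum_congr (Finset.filter_congr key) (fun _ _ => rfl)

/-- Let `m > 0` and `d` an integer with `gcd(d,m) = 1` and `|d| ≠ 1`. For
`s ∣ m` let `φ_d(s)` be the multiplicative order of `d` mod `s` and `φ` the Euler totient,
and for `1 ≤ t ≤ φ_d(m)` set `a(t) = Σ_{s∣m, φ_d(m) ∣ t·φ_d(s)} φ(s)/φ_d(s)`. Then each
`a(t)` is a natural number and for every `n ≥ 1`,
`gcd(1 − dⁿ, m) = Σ_{t=1}^{φ_d(m)} a(t)·exp(2πint/φ_d(m))`. -/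
theorem gcd_one_sub_pow_fourier_expansion (m : ℕ) (hm : 0 < m) (d : ℤ)
    (hcop : Int.gcd d (m : ℤ) = 1) (hd : d.natAbs ≠ 1)
    (od : ℕ → ℕ) (hod : ∀ s : ℕ, od s = orderOf ((d : ZMod s)))
    (a : ℕ → ℂ)
    (ha : ∀ t : ℕ, a t = ∑ s ∈ m.divisors,
      if od m ∣ t * od s then (Nat.totient s : ℂ) / (od s : ℂ) else 0) :
    (∀ t ∈ Finset.Icc 1 (od m), ∃ k : ℕ, a t = (k : ℂ)) ∧
    ∀ n : ℕ, 1 ≤ n →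
      (Int.gcd (1 - d ^ n) (m : ℤ) : ℂ) =
        ∑ t ∈ Finset.Icc 1 (od m),
          a t * Complex.exp (2 * Real.pi * Complex.I * (n : ℂ) * (t : ℂ) / (od m : ℂ)) := by
  have hfacts : ∀ s ∈ m.divisors, 0 < od s ∧ od s ∣ Nat.totient s ∧ od s ∣ od m := by
    intro s hsmem
    obtain ⟨hsm, -⟩ := Nat.mem_divisors.mp hsmem
    have hs0 : 0 < s := Nat.pos_of_mem_divisors hsmem
    obtain ⟨h1, h2, h3⟩ := order_facts hm hcop hsm hs0
    rw [hod s, hod m]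
    exact ⟨h1, h2, h3⟩
  have hD : 0 < od m := by
    have : m ∈ m.divisors := Nat.mem_divisors_self m hm.ne'
    exact (hfacts m this).1
  constructor
  · intro t _
    refine ⟨∑ s ∈ m.divisors.filter (fun s => od m ∣ t * od s), Nat.totient s / od s, ?_⟩
    rw [ha t, ← Finset.sum_filter]
    push_cast [Nat.cast_sum]
    refine Finset.sum_congr rfl ?_
    intro s hs
    have hs' := hfacts s (Finset.mem_filter.mp hs).1
    rw [Nat.cast_div hs'.2.1 (Nat.cast_ne_zero.mpr hs'.1.ne')]
  · intro n hn
    simp only [ha]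
    simp only [Finset.sum_mul]
    rw [Finset.sum_comm]
    have step : ∀ s ∈ m.divisors,
        (∑ t ∈ Finset.Icc 1 (od m), (if od m ∣ t * od s then (s.totient : ℂ) / (od s : ℂ) else 0)
            * Complex.exp (2 * Real.pi * Complex.I * (n : ℂ) * (t : ℂ) / (od m : ℂ))) =
        if od s ∣ n then (s.totient : ℂ) else 0 := by
      intro s hs
      obtain ⟨hpos, hdvdtot, hdvdD⟩ := hfacts s hs
      set g := od m / od s with hgdef
      have hgm : od m = g * od s := (Nat.div_mul_cancel hdvdD).symm
      have hg : 0 < g := Nat.div_pos (Nat.le_of_dvd hD hdvdD) hpos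
      have hcond : ∀ t, (od m ∣ t * od s) ↔ (g ∣ t) := by
        intro t
        conv_lhs => rw [hgm]
        exact Nat.mul_dvd_mul_iff_right hpos
      have hkey := sum_exp_filter (od s) g hpos hg n
      rw [← hgm] at hkey
      have h1 : ∀ t ∈ Finset.Icc 1 (od m),
          (if od m ∣ t * od s then (s.totient : ℂ) / (od s : ℂ) else 0)
            * Complex.exp (2 * Real.pi * Complex.I * (n : ℂ) * (t : ℂ) / (od m : ℂ)) =
          ((s.totient : ℂ) / (od s : ℂ)) * (if g ∣ t then
            Complex.exp (2 * Real.pi * Complex.I * (n : ℂ) * (t : ℂ) / ((od m : ℕ) : ℂ)) else 0) := by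
        intro t _
        simp only [hcond t]
        split_ifs <;> ring
      rw [Finset.sum_congr rfl h1, ← Finset.mul_sum, hkey]
      rw [div_mul_comm]
      split_ifs
      · rw [div_self (Nat.cast_ne_zero.mpr hpos.ne'), one_mul]
      · rw [zero_div, zero_mul]
    rw [Finset.sum_congr rfl step, gcd_eq_sum_aux hm hcop n]
    rw [← Finset.sum_filter]
    push_cast [Nat.cast_sum]
    refine Finset.sum_congr ?_ (fun _ _ => rfl)
    refine Finset.filter_congr ?_
    intro s _
    rw [hod s]
end

section
/- Let m be a positive integer and let N assign to each divisor d of m a natural number N_d; extend N to all positive integers j by N_j := N_{gcd(j,m)} (equivalently: N_{j+m} = N_j for all j, and N_{d·i} = N_d whenever d ∣ m and gcd(i, m/d) = 1). For each divisor d of m set P(d) = Σ_{d₁∣d} μ(d₁)·N_{d/d₁}. Then for every complex z with |z| < 1: Σ_{j≥1} N_{gcd(j,m)}·z^j/j = −Σ_{d∣m} (P(d)/d)·Log(1 − z^d), where Log is the principal branch of the complex logarithm; equivalently, exp(Σ_{j≥1} N_j z^j/j)^m = ∏_{d∣m} (1 − z^d)^{−m·P(d)/d}, where each exponent m·P(d)/d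 is an integer. -/
open ArithmeticFunction in
/-- Let `m > 0` and let `N : ℕ → ℕ` satisfy `N j = N (gcd j m)` for all
`j ≥ 1`, and for `d ∣ m` set `P(d) = Σ_{d₁∣d} μ(d₁)·N(d/d₁)`. Then for `|z| < 1`:
`Σ_{j≥1} N_j z^j/j = −Σ_{d∣m} (P(d)/d)·Log(1 − z^d)` (principal branch), equivalently
`exp(Σ_{j≥1} N_j z^j/j)^m = ∏_{d∣m} (1 − z^d)^{−m·P(d)/d}`, where each exponent `m·P(d)/d`
is an integer. -/
theorem periodic_nielsen_zeta_radical_of_rational (m : ℕ) (hm : 0 < m) (N : ℕ → ℕ)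
    (hN : ∀ j : ℕ, 1 ≤ j → N j = N (Nat.gcd j m))
    (P : ℕ → ℤ)
    (hP : ∀ d : ℕ, P d = ∑ d₁ ∈ d.divisors, (moebius d₁) * (N (d / d₁) : ℤ)) :
    (∀ d ∈ m.divisors, (d : ℤ) ∣ (m : ℤ) * P d) ∧
    ∀ z : ℂ, ‖z‖ < 1 →
      (∑' j : ℕ, (N (j + 1) : ℂ) * z ^ (j + 1) / ((j : ℂ) + 1)) =
          -∑ d ∈ m.divisors, ((P d : ℂ) / (d : ℂ)) * Complex.log (1 - z ^ d) ∧
        Complex.exp (∑' j : ℕ, (N (j + 1) : ℂ) * z ^ (j + 1) / ((j : ℂ) + 1)) ^ m =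
          ∏ d ∈ m.divisors, (1 - z ^ d) ^ (-(((m : ℤ) * P d) / (d : ℤ))) := by
  -- divisibility part
  have hdvd : ∀ d ∈ m.divisors, (d : ℤ) ∣ (m : ℤ) * P d := by
    intro d hd
    exact dvd_mul_of_dvd_left (Int.natCast_dvd_natCast.mpr (Nat.dvd_of_mem_divisors hd)) _
  refine ⟨hdvd, ?_⟩
  -- Möbius inversion: ∑_{e ∣ n} P e = N n for n > 0
  have key : ∀ n > 0, ∑ i ∈ n.divisors, P i = (N n : ℤ) := by
    rw [sum_eq_iff_sum_smul_moebius_eq]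
    intro n hn
    rw [Nat.sum_divisorsAntidiagonal (f := fun a b => (moebius a : ℤ) • (N b : ℤ))]
    simp only [smul_eq_mul]
    exact (hP n).symm
  -- N (j+1) expressed as a sum over divisors of m
  have keyN : ∀ j : ℕ, (N (j + 1) : ℤ) =
      ∑ e ∈ m.divisors, (if e ∣ (j + 1) then P e else 0) := by
    intro j
    have h1 : N (j + 1) = N (Nat.gcd (j + 1) m) := hN _ (by omega)
    have hg : 0 < Nat.gcd (j + 1) m := Nat.gcd_pos_of_pos_left _ (by omega)
    rw [h1, ← key _ hg, ← Finset.sum_filter]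
    congr 1
    ext e
    simp only [Nat.mem_divisors, Finset.mem_filter]
    constructor
    · intro ⟨h1, _⟩
      exact ⟨⟨(Nat.dvd_gcd_iff.mp h1).2, hm.ne'⟩, (Nat.dvd_gcd_iff.mp h1).1⟩
    · intro ⟨⟨h1, _⟩, h2⟩
      exact ⟨Nat.dvd_gcd h2 h1, hg.ne'⟩
  intro z hz
  have hz1 : ‖z‖ ≤ 1 := hz.le
  have hznorm : ∀ d ∈ m.divisors, ‖z ^ d‖ < 1 := by
    intro d hd
    have hd1 : 1 ≤ d := Nat.pos_of_mem_divisors hd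
    calc ‖z ^ d‖ = ‖z‖ ^ d := norm_pow z d
    _ ≤ ‖z‖ := pow_le_of_le_one (norm_nonneg z) hz1 (by omega)
    _ < 1 := hz
  have hne : ∀ d ∈ m.divisors, 1 - z ^ d ≠ 0 := by
    intro d hd h
    have h2 : z ^ d = 1 := by linear_combination -h
    have h3 := hznorm d hd
    rw [h2] at h3
    simp at h3
  -- the main HasSum
  have hmain : HasSum (fun j : ℕ => (N (j + 1) : ℂ) * z ^ (j + 1) / ((j : ℂ) + 1))
      (∑ d ∈ m.divisors, (P d : ℂ) / (d : ℂ) * (-Complex.log (1 - z ^ d))) := by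
    have hterm : ∀ e ∈ m.divisors,
        HasSum (fun j : ℕ => (if e ∣ (j + 1) then (P e : ℂ) else 0) * z ^ (j + 1) / ((j : ℂ) + 1))
          ((P e : ℂ) / (e : ℂ) * (-Complex.log (1 - z ^ e))) := by
      intro e he
      have he1 : 1 ≤ e := Nat.pos_of_mem_divisors he
      have heC : (e : ℂ) ≠ 0 := Nat.cast_ne_zero.mpr (by omega)
      have hw := Complex.hasSum_taylorSeries_neg_log (hznorm e he)
      -- shift index
      have hw1 : HasSum (fun k : ℕ => (z ^ e) ^ (k + 1) / ((k : ℂ) + 1))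
          (-Complex.log (1 - z ^ e)) := by
        have := (hasSum_nat_add_iff (f := fun n : ℕ => (z ^ e) ^ n / (n : ℂ)) 1).mpr
          (by simpa using hw)
        convert this using 2 with k
        · rfl
        push_cast
        ring
      have hw2 := hw1.mul_left ((P e : ℂ) / (e : ℂ))
      set f : ℕ → ℂ := fun j => (if e ∣ (j + 1) then (P e : ℂ) else 0) * z ^ (j + 1) / ((j : ℂ) + 1)
      have hi : Function.Injective (fun k : ℕ => e * k + (e - 1)) := by
        intro a b h
        simp only [add_left_inj] at h
        exact Nat.eq_of_mul_eq_mul_left he1 h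
      have hvan : ∀ x ∉ Set.range (fun k : ℕ => e * k + (e - 1)), f x = 0 := by
        intro x hx
        have : ¬ e ∣ (x + 1) := by
          intro ⟨c, hc⟩
          rcases c with _ | c'
          · omega
          · refine hx ⟨c', ?_⟩
            have hce : e * (c' + 1) = e * c' + e := by ring
            simp only
            omega
        simp [f, this]
      refine (hi.hasSum_iff hvan).mp ?_
      convert hw2 using 1
      · rfl
      funext k
      have hk : e * k + (e - 1) + 1 = e * (k + 1) := by
        have hce : e * (k + 1) = e * k + e := by ring
        omega
      have hdvd' : e ∣ (e * k + (e - 1) + 1) := hk ▸ Dvd.intro _ rfl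
      have hcast : ((e * k + (e - 1) : ℕ) : ℂ) + 1 = (e : ℂ) * ((k : ℂ) + 1) := by
        have : ((e * k + (e - 1) : ℕ) : ℂ) + 1 = ((e * k + (e - 1) + 1 : ℕ) : ℂ) := by push_cast; ring
        rw [this, hk]; push_cast; ring
      simp only [Function.comp_apply, f, if_pos hdvd', hcast]
      rw [← pow_mul, ← hk]
      field_simp
    have := hasSum_sum hterm
    convert this using 2 with j
    rw [← Finset.sum_div, ← Finset.sum_mul]
    congr 2
    have := keyN j
    have : ((N (j+1) : ℤ) : ℂ) = ((∑ e ∈ m.divisors, (if e ∣ (j + 1) then P e else 0) : ℤ) : ℂ) := by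
      exact_mod_cast congrArg (Int.cast : ℤ → ℂ) this
    push_cast at this
    simpa using this
  have hsum_eq : (∑' j : ℕ, (N (j + 1) : ℂ) * z ^ (j + 1) / ((j : ℂ) + 1)) =
      ∑ d ∈ m.divisors, (P d : ℂ) / (d : ℂ) * (-Complex.log (1 - z ^ d)) := hmain.tsum_eq
  constructor
  · rw [hsum_eq, ← Finset.sum_neg_distrib]
    congr 1 with d
    ring
  · rw [hsum_eq, ← Complex.exp_nat_mul, Finset.mul_sum]
    have : ∀ d ∈ m.divisors,
        (m : ℂ) * ((P d : ℂ) / (d : ℂ) * (-Complex.log (1 - z ^ d))) =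
          ((-(((m : ℤ) * P d) / (d : ℤ)) : ℤ) : ℂ) * Complex.log (1 - z ^ d) := by
      intro d hd
      have hdpos : 0 < d := Nat.pos_of_mem_divisors hd
      have hdC : (d : ℂ) ≠ 0 := Nat.cast_ne_zero.mpr hdpos.ne'
      have h1 : ((((m : ℤ) * P d) / (d : ℤ) : ℤ) : ℂ) * (d : ℂ) = (m : ℂ) * (P d : ℂ) := by
        rw [← Int.cast_natCast (R := ℂ), ← Int.cast_mul, Int.ediv_mul_cancel (hdvd d hd)]
        push_cast; ring
      push_cast
      field_simp
      linear_combination (Complex.log (1 - z ^ d)) * h1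
    rw [Finset.sum_congr rfl this, Complex.exp_sum]
    refine Finset.prod_congr rfl fun d hd => ?_
    rw [Complex.exp_int_mul, Complex.exp_log (hne d hd)]
end
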